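/- arXiv:1909.12468 — 7 statements merged into one kernel-verified Lean document; each statement's English description precedes it below -/
import Mathlib

section
/- A set E in a metric space is uniformly disconnected (i.e., there is C>1 such that for each ξ∈E and r>0 there is A⊆E with B(ξ,r/C)∩E ⊆ A ⊆ B(ξ,r) and dist(A, E∖A) ≥ r/C) if and only if there exists ε₀>0 such that no pair of distinct points ξ,ξ'∈E can be joined by an ε₀-chain in E, where an ε₀-chain from ξ to ξ' is a finite sequence ξ=ξ₀,ξ₁,…,ξₙ=ξ' in E with d(ξᵢ,ξᵢ₊₁) ≤ ε₀·d(ξ,ξ') for all i. -/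
/-- `E` is uniformly disconnected: there is `C > 1` such that for each `ξ ∈ E` and `r > 0`
there is `A ⊆ E` with `B(ξ, r/C) ∩ E ⊆ A ⊆ B(ξ, r)` and `dist (A, E \ A) ≥ r/C`
(stated pointwise, so it holds vacuously if `E \ A = ∅`). -/
def UnifDisc {X : Type*} [PseudoMetricSpace X] (E : Set X) : Prop :=
  ∃ C > (1 : ℝ), ∀ ξ ∈ E, ∀ r > (0 : ℝ), ∃ A ⊆ E,
    Metric.ball ξ (r / C) ∩ E ⊆ A ∧ A ⊆ Metric.ball ξ r ∧
    ∀ a ∈ A, ∀ b ∈ E \ A, r / C ≤ dist a b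

/-- `E` is uniformly disconnected iff there is `ε₀ > 0` such that no pair of
distinct points `ξ, ξ' ∈ E` can be joined by an `ε₀`-chain in `E`, i.e. a finite sequence
`ξ = f 0, f 1, …, f k = ξ'` in `E` with consecutive distances at most `ε₀ * dist ξ ξ'`. -/
theorem uniformlyDisconnected_iff_no_chain {X : Type*} [MetricSpace X] (E : Set X) :
    UnifDisc E ↔ ∃ ε₀ > (0 : ℝ), ∀ ξ ∈ E, ∀ ξ' ∈ E, ξ ≠ ξ' →
      ¬ ∃ (k : ℕ) (f : ℕ → X), f 0 = ξ ∧ f k = ξ' ∧ (∀ l ≤ k, f l ∈ E) ∧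
        ∀ l < k, dist (f l) (f (l + 1)) ≤ ε₀ * dist ξ ξ' := by
  constructor
  · rintro ⟨C, hC, hUD⟩
    refine ⟨1 / (2 * C), by positivity, ?_⟩
    rintro ξ hξ ξ' hξ' hne ⟨k, f, hf0, hfk, hfE, hstep⟩
    set r : ℝ := dist ξ ξ' with hr
    have hrpos : 0 < r := dist_pos.mpr hne
    obtain ⟨A, hAE, hball, hAball, hsep⟩ := hUD ξ hξ r hrpos
    have hξA : ξ ∈ A := hball ⟨by simp [Metric.mem_ball]; positivity, hξ⟩
    have hξ'A : ξ' ∉ A := fun h => by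
      have := hAball h
      rw [Metric.mem_ball, dist_comm] at this
      exact lt_irrefl _ this
    -- find crossing index
    have hcross : ∃ l < k, f l ∈ A ∧ f (l + 1) ∉ A := by
      by_contra h
      push_neg at h
      have hall : ∀ l ≤ k, f l ∈ A := by
        intro l hl
        induction l with
        | zero => rw [hf0]; exact hξA
        | succ n ih =>
          have hn : n < k := Nat.lt_of_succ_le hl
          by_contra hna
          exact hna (h n hn (ih hn.le))
      exact hξ'A (hfk ▸ hall k le_rfl)
    obtain ⟨l, hlk, hlA, hl1A⟩ := hcross
    have h1 := hsep _ hlA _ ⟨hfE (l + 1) hlk, hl1A⟩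
    have h2 := hstep l hlk
    have hC0 : (0:ℝ) < C := by linarith
    have h3 : r / C ≤ r / (2 * C) := by
      calc r / C ≤ 1 / (2 * C) * r := le_trans h1 h2
        _ = r / (2 * C) := by ring
    rw [div_le_div_iff₀ hC0 (by linarith)] at h3
    nlinarith
  · rintro ⟨ε₀, hε₀, hnc⟩
    refine ⟨max 2 (2 / ε₀), lt_of_lt_of_le one_lt_two (le_max_left _ _), ?_⟩
    intro ξ hξ r hrpos
    set C : ℝ := max 2 (2 / ε₀) with hCdef
    have hCpos : (0:ℝ) < C := lt_of_lt_of_le two_pos (le_max_left _ _)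
    have hδ : r / C ≤ ε₀ * r / 2 := by
      have h1 : 2 / ε₀ ≤ C := le_max_right _ _
      have h2 : (0:ℝ) < 2 / ε₀ := by positivity
      calc r / C ≤ r / (2 / ε₀) := by
            apply div_le_div_of_nonneg_left hrpos.le h2 h1
        _ = ε₀ * r / 2 := by field_simp
    set δ : ℝ := ε₀ * r / 2 with hδdef
    set A : Set X := {a | a ∈ E ∧ ∃ (k : ℕ) (f : ℕ → X), f 0 = ξ ∧ f k = a ∧
      (∀ l ≤ k, f l ∈ E) ∧ ∀ l < k, dist (f l) (f (l + 1)) ≤ δ} with hAdef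
    have hAE : A ⊆ E := fun a ha => ha.1
    -- every point of A is within r/2 of ξ
    have hnear : ∀ a ∈ A, dist ξ a < r / 2 := by
      rintro a ⟨haE, k, f, hf0, hfk, hfE, hstep⟩
      by_contra hfar
      push_neg at hfar
      have hane : ξ ≠ a := by
        intro h; rw [← h, dist_self] at hfar; linarith
      apply hnc ξ hξ a haE hane
      refine ⟨k, f, hf0, hfk, hfE, fun l hl => ?_⟩
      calc dist (f l) (f (l + 1)) ≤ δ := hstep l hl
        _ ≤ ε₀ * dist ξ a := by
            rw [hδdef]
            have := mul_le_mul_of_nonneg_left hfar hε₀.le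
            linarith
    refine ⟨A, hAE, ?_, ?_, ?_⟩
    · rintro b ⟨hbball, hbE⟩
      refine ⟨hbE, 1, fun n => if n = 0 then ξ else b, by simp, by simp, ?_, ?_⟩
      · intro l hl
        interval_cases l <;> simp [hξ, hbE]
      · intro l hl
        interval_cases l
        simp only [if_pos rfl, if_neg one_ne_zero]
        rw [Metric.mem_ball, dist_comm] at hbball
        exact le_trans hbball.le hδ
    · intro a ha
      rw [Metric.mem_ball, dist_comm]
      exact lt_of_lt_of_le (hnear a ha) (by linarith)
    · rintro a ha b ⟨hbE, hbA⟩
      by_contra hlt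
      push_neg at hlt
      apply hbA
      obtain ⟨haE, k, f, hf0, hfk, hfE, hstep⟩ := ha
      refine ⟨hbE, k + 1, fun n => if n ≤ k then f n else b, by simp [hf0],
        by simp, ?_, ?_⟩
      · intro l hl
        by_cases h : l ≤ k
        · simp [h, hfE l h]
        · simp [h, hbE]
      · intro l hl
        by_cases h : l + 1 ≤ k
        · have hlk : l ≤ k := le_trans (Nat.le_succ l) h
          simp only [if_pos hlk, if_pos h]
          exact hstep l (Nat.lt_of_succ_le h)
        · have hlk : l = k := by omega
          subst hlk
          simp only [le_refl, if_pos, if_neg (by omega : ¬ l + 1 ≤ l)]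
          rw [hfk]
          exact le_trans hlt.le hδ
end

section
/- Let A ⊆ ℝ^d be compact and uniformly disconnected with constant C>1. Then every δ-equivalence class A_x of A has diameter at most C·δ, and consequently 𝔑(δ, A) ≥ N_{Cδ}(A). -/
/-- `x` and `y` are `δ`-equivalent in `A`: joined by a finite chain in `A` with
consecutive distances at most `δ`. -/
def DeltaEquiv {X : Type*} [PseudoMetricSpace X] (δ : ℝ) (A : Set X) (x y : X) : Prop :=
  ∃ (k : ℕ) (f : ℕ → X), f 0 = x ∧ f k = y ∧ (∀ l ≤ k, f l ∈ A) ∧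
    ∀ l < k, dist (f l) (f (l + 1)) ≤ δ

/-- `𝔑(δ, A)`: the number of `δ`-equivalence classes of `A`. -/
noncomputable def NClass {X : Type*} [PseudoMetricSpace X] (δ : ℝ) (A : Set X) : ℕ :=
  Set.ncard {S : Set X | ∃ x ∈ A, S = {y | DeltaEquiv δ A x y}}

/-- `N_δ(A)`: the smallest number of sets of diameter at most `δ` needed to cover `A`. -/
noncomputable def NCov {X : Type*} [PseudoMetricSpace X] (δ : ℝ) (A : Set X) : ℕ :=
  sInf {k : ℕ | ∃ U : Fin k → Set X, (A ⊆ ⋃ i, U i) ∧ ∀ i, Metric.diam (U i) ≤ δ}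

variable {X : Type*} [PseudoMetricSpace X] {δ : ℝ} {A : Set X} {x y z : X}

lemma deltaEquiv_refl (hx : x ∈ A) : DeltaEquiv δ A x x :=
  ⟨0, fun _ => x, rfl, rfl, fun _ _ => hx, fun l hl => absurd hl (Nat.not_lt_zero l)⟩

lemma deltaEquiv_mem_right (h : DeltaEquiv δ A x y) : y ∈ A := by
  obtain ⟨k, f, h0, hk, hmem, hd⟩ := h
  exact hk ▸ hmem k le_rfl

lemma deltaEquiv_symm (h : DeltaEquiv δ A x y) : DeltaEquiv δ A y x := by
  obtain ⟨k, f, h0, hk, hmem, hd⟩ := h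
  refine ⟨k, fun l => f (k - l), by simp [hk], by simp [h0], fun l _ => hmem _ (Nat.sub_le _ _),
    fun l hl => ?_⟩
  have h1 : k - l = (k - (l + 1)) + 1 := by omega
  show dist (f (k - l)) (f (k - (l + 1))) ≤ δ
  rw [h1, dist_comm]
  exact hd _ (by omega)

lemma deltaEquiv_trans (h1 : DeltaEquiv δ A x y) (h2 : DeltaEquiv δ A y z) :
    DeltaEquiv δ A x z := by
  obtain ⟨k, f, hf0, hfk, hfm, hfd⟩ := h1
  obtain ⟨m, g, hg0, hgm, hgm', hgd⟩ := h2
  refine ⟨k + m, fun l => if l ≤ k then f l else g (l - k), by simp [hf0], ?_, ?_, ?_⟩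
  · show (if k + m ≤ k then f (k + m) else g (k + m - k)) = z
    rcases Nat.eq_zero_or_pos m with hm | hm
    · subst hm
      rw [if_pos (by omega)]
      simpa using hfk.trans (hg0.symm.trans hgm)
    · rw [if_neg (by omega)]
      simpa using hgm
  · intro l hl
    show (if l ≤ k then f l else g (l - k)) ∈ A
    by_cases h : l ≤ k
    · rw [if_pos h]; exact hfm _ h
    · rw [if_neg h]; exact hgm' _ (by omega)
  · intro l hl
    show dist (if l ≤ k then f l else g (l - k)) (if l + 1 ≤ k then f (l + 1) else g (l + 1 - k)) ≤ δ
    rcases lt_trichotomy l k with h | h | h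
    · rw [if_pos h.le, if_pos (Nat.succ_le_of_lt h)]
      exact hfd l h
    · subst h
      rw [if_pos le_rfl, if_neg (by omega)]
      have h3 : l + 1 - l = 1 := by omega
      rw [h3, hfk, ← hg0]
      exact hgd 0 (by omega)
    · rw [if_neg (by omega), if_neg (by omega)]
      have h3 : l + 1 - k = (l - k) + 1 := by omega
      rw [h3]
      exact hgd _ (by omega)

lemma deltaEquiv_dist_le {X : Type*} [PseudoMetricSpace X] {δ C : ℝ} {A : Set X}
    (hC : 1 < C)
    (hud : ∀ ξ ∈ A, ∀ r > (0 : ℝ), ∃ S ⊆ A,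
      Metric.ball ξ (r / C) ∩ A ⊆ S ∧ S ⊆ Metric.ball ξ r ∧
      ∀ p ∈ S, ∀ q ∈ A \ S, r / C ≤ dist p q)
    (hδ : 0 < δ) {y z : X} (hy : y ∈ A) (h : DeltaEquiv δ A y z) :
    dist y z ≤ C * δ := by
  have hC0 : (0 : ℝ) < C := lt_trans zero_lt_one hC
  refine le_of_forall_gt_imp_ge_of_dense fun c hc => ?_
  have hc0 : 0 < c := lt_trans (by positivity) hc
  obtain ⟨S, hSA, hball, hSball, hsep⟩ := hud y hy c hc0
  have hδc : δ < c / C := by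
    rw [lt_div_iff₀ hC0]
    linarith [hc, mul_comm C δ]
  obtain ⟨k, f, hf0, hfk, hfm, hfd⟩ := h
  have hmemS : ∀ l ≤ k, f l ∈ S := by
    intro l hl
    induction l with
    | zero =>
      apply hball
      refine ⟨?_, hfm 0 (Nat.zero_le _)⟩
      rw [hf0]
      simpa [Metric.mem_ball] using lt_of_le_of_lt hδ.le hδc
    | succ n ih =>
      have hn : n ≤ k := by omega
      by_contra hne
      have := hsep (f n) (ih hn) (f (n + 1)) ⟨hfm _ hl, hne⟩
      have := hfd n (by omega)
      linarith
  have : z ∈ Metric.ball y c := hSball (hfk ▸ hmemS k le_rfl)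
  rw [Metric.mem_ball] at this
  rw [dist_comm]
  exact this.le

theorem class_diam_le_and_ncov_le_nclass {d : ℕ} (A : Set (EuclideanSpace ℝ (Fin d)))
    (hA : IsCompact A) (C : ℝ) (hC : 1 < C)
    (hud : ∀ ξ ∈ A, ∀ r > (0 : ℝ), ∃ S ⊆ A,
      Metric.ball ξ (r / C) ∩ A ⊆ S ∧ S ⊆ Metric.ball ξ r ∧
      ∀ p ∈ S, ∀ q ∈ A \ S, r / C ≤ dist p q)
    (δ : ℝ) (hδ : 0 < δ) :
    (∀ x ∈ A, Metric.diam {z | DeltaEquiv δ A x z} ≤ C * δ) ∧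
    NCov (C * δ) A ≤ NClass δ A := by
  classical
  have hC0 : (0 : ℝ) < C := lt_trans zero_lt_one hC
  have hdiam : ∀ x ∈ A, Metric.diam {z | DeltaEquiv δ A x z} ≤ C * δ := by
    intro x hx
    apply Metric.diam_le_of_forall_dist_le (by positivity)
    intro y hy z hz
    exact deltaEquiv_dist_le hC hud hδ (deltaEquiv_mem_right hy)
      (deltaEquiv_trans (deltaEquiv_symm hy) hz)
  refine ⟨hdiam, ?_⟩
  -- the set of classes
  set 𝒞 : Set (Set (EuclideanSpace ℝ (Fin d))) :=
    {S | ∃ x ∈ A, S = {y | DeltaEquiv δ A x y}} with h𝒞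
  -- classes that share close points coincide
  have hclass_eq : ∀ a b : EuclideanSpace ℝ (Fin d), DeltaEquiv δ A a b →
      {y | DeltaEquiv δ A a y} = {y | DeltaEquiv δ A b y} := by
    intro a b hab
    ext w
    exact ⟨fun hw => deltaEquiv_trans (deltaEquiv_symm hab) hw,
      fun hw => deltaEquiv_trans hab hw⟩
  -- finiteness of the set of classes
  obtain ⟨t, htfin, htcov⟩ := (Metric.totallyBounded_iff.mp hA.totallyBounded) (δ / 2)
    (by positivity)
  have key : ∀ S ∈ 𝒞, ∃ c ∈ t, ∃ x ∈ A, S = {y | DeltaEquiv δ A x y} ∧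
      x ∈ Metric.ball c (δ / 2) := by
    rintro S ⟨x, hx, rfl⟩
    have := htcov hx
    simp only [Set.mem_iUnion] at this
    obtain ⟨c, hc, hxc⟩ := this
    exact ⟨c, hc, x, hx, rfl, hxc⟩
  set φ : Set (EuclideanSpace ℝ (Fin d)) → EuclideanSpace ℝ (Fin d) :=
    fun S => if h : S ∈ 𝒞 then (key S h).choose else 0 with hφ
  have hφt : ∀ S ∈ 𝒞, φ S ∈ t := by
    intro S hS
    simp only [hφ, dif_pos hS]
    exact (key S hS).choose_spec.1
  have hφinj : Set.InjOn φ 𝒞 := by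
    intro S hS T hT hST
    obtain ⟨xS, hxS, hSx, hxSc⟩ := (key S hS).choose_spec.2
    obtain ⟨xT, hxT, hTx, hxTc⟩ := (key T hT).choose_spec.2
    rw [hφ] at hST
    simp only [dif_pos hS, dif_pos hT] at hST
    rw [hST] at hxSc
    have hd : dist xS xT ≤ δ := by
      have := dist_triangle xS ((key T hT).choose) xT
      rw [Metric.mem_ball] at hxSc hxTc
      rw [dist_comm] at hxTc
      linarith
    have : DeltaEquiv δ A xS xT := by
      refine ⟨1, fun l => if l = 0 then xS else xT, by simp, by simp, ?_, ?_⟩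
      · intro l hl
        by_cases h : l = 0 <;> simp [h, hxS, hxT]
      · intro l hl
        interval_cases l
        simpa using hd
    rw [hSx, hTx, hclass_eq _ _ this]
  have hfin : 𝒞.Finite := by
    apply Set.Finite.of_finite_image _ hφinj
    exact htfin.subset (by rintro _ ⟨S, hS, rfl⟩; exact hφt S hS)
  -- enumerate classes
  have hcard : NClass δ A = hfin.toFinset.card := Set.ncard_eq_toFinset_card _ hfin
  let e := hfin.toFinset.equivFin
  set U : Fin (NClass δ A) → Set (EuclideanSpace ℝ (Fin d)) :=
    fun i => (e.symm (Fin.cast hcard i) : Set (EuclideanSpace ℝ (Fin d))) with hU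
  have hcov : A ⊆ ⋃ i, U i := by
    intro x hx
    have hm : {y | DeltaEquiv δ A x y} ∈ 𝒞 := ⟨x, hx, rfl⟩
    have hm' : {y | DeltaEquiv δ A x y} ∈ hfin.toFinset := hfin.mem_toFinset.mpr hm
    refine Set.mem_iUnion.mpr ⟨Fin.cast hcard.symm (e ⟨_, hm'⟩), ?_⟩
    have hcc : Fin.cast hcard (Fin.cast hcard.symm (e ⟨_, hm'⟩)) = e ⟨_, hm'⟩ := by
      ext; simp
    show x ∈ (e.symm (Fin.cast hcard (Fin.cast hcard.symm (e ⟨_, hm'⟩))) :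
      Set (EuclideanSpace ℝ (Fin d)))
    rw [hcc, e.symm_apply_apply]
    exact deltaEquiv_refl hx
  have hdiamU : ∀ i, Metric.diam (U i) ≤ C * δ := by
    intro i
    have hm : (U i : Set (EuclideanSpace ℝ (Fin d))) ∈ 𝒞 :=
      hfin.mem_toFinset.mp (e.symm (Fin.cast hcard i)).2
    obtain ⟨x, hx, hSx⟩ := hm
    rw [hSx]
    exact hdiam x hx
  exact Nat.sInf_le ⟨U, hcov, hdiamU⟩
end

section
/- Let A be a compact metric space with gap sequence {α_k}_{k≥1} and let γ>0. Then α_k ≍ k^{-1/γ} (meaning there is c≥1 with c^{-1} k^{-1/γ} ≤ α_k ≤ c k^{-1/γ} for all k) if and only if 𝔑(δ, A) ≍ δ^{-γ} (meaning there is c'≥1 with c'^{-1} δ^{-γ} ≤ 𝔑(δ,A) ≤ c' δ^{-γ} for all sufficiently small δ > 0). -/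
/-- `α` (indexed from `k = 1`) is the gap sequence of `A`: a non-increasing positive
sequence listing the jump points of `δ ↦ 𝔑(δ, A)` with multiplicity `𝔑(δ⁻) - 𝔑(δ)`;
equivalently, `𝔑(δ, A) = #{k ≥ 1 : α k > δ} + 1` for every `δ > 0`. -/
def IsGapSeq {X : Type*} [PseudoMetricSpace X] (A : Set X) (α : ℕ → ℝ) : Prop :=
  (∀ k, 1 ≤ k → 0 < α k) ∧ (∀ k l, 1 ≤ k → k ≤ l → α l ≤ α k) ∧
  ∀ δ > (0 : ℝ), NClass δ A = {k | 1 ≤ k ∧ δ < α k}.ncard + 1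


lemma myIcc (a b : ℕ) : (Set.Icc a b).ncard = b + 1 - a := by
  simp [Set.ncard_eq_toFinset_card', Set.toFinset_Icc]

lemma myIco (a b : ℕ) : (Set.Ico a b).ncard = b - a := by
  simp [Set.ncard_eq_toFinset_card', Set.toFinset_Ico]

lemma rpow_lt_rpow_iff' {a b γ : ℝ} (ha : 0 ≤ a) (hb : 0 ≤ b) (hγ : 0 < γ) :
    a ^ γ < b ^ γ ↔ a < b := by
  constructor
  · intro h
    by_contra hle
    exact absurd (Real.rpow_le_rpow hb (not_lt.1 hle) hγ.le) (not_le.2 h)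
  · exact fun h => Real.rpow_lt_rpow ha h hγ

lemma rpow_inv_rpow' {γ x : ℝ} (hγ : 0 < γ) (hx : 0 ≤ x) : (x ^ (1/γ)) ^ γ = x := by
  rw [← Real.rpow_mul hx, one_div_mul_cancel hγ.ne', Real.rpow_one]

lemma rpow_rpow_inv' {γ x : ℝ} (hγ : 0 < γ) (hx : 0 ≤ x) : (x ^ γ) ^ (1/γ) = x := by
  rw [← Real.rpow_mul hx, mul_one_div_cancel hγ.ne', Real.rpow_one]

lemma L1' {α : ℕ → ℝ} (hmono : ∀ k l, 1 ≤ k → k ≤ l → α l ≤ α k) {δ : ℝ} {k : ℕ}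
    (hfin : ({j : ℕ | 1 ≤ j ∧ δ < α j}).Finite) (hk : 1 ≤ k) (hδ : δ < α k) :
    k ≤ ({j : ℕ | 1 ≤ j ∧ δ < α j}).ncard := by
  have hsub : Set.Icc 1 k ⊆ {j : ℕ | 1 ≤ j ∧ δ < α j} := by
    rintro j ⟨hj1, hjk⟩
    exact ⟨hj1, lt_of_lt_of_le hδ (hmono j k hj1 hjk)⟩
  have h := Set.ncard_le_ncard hsub hfin
  rw [myIcc] at h; omega

lemma L2' {α : ℕ → ℝ} (hmono : ∀ k l, 1 ≤ k → k ≤ l → α l ≤ α k) {δ : ℝ} {k : ℕ}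
    (hk : 1 ≤ k) (hδ : α k ≤ δ) :
    ({j : ℕ | 1 ≤ j ∧ δ < α j}).ncard + 1 ≤ k := by
  have hsub : {j : ℕ | 1 ≤ j ∧ δ < α j} ⊆ Set.Ico 1 k := by
    rintro j ⟨hj1, hj2⟩
    refine ⟨hj1, ?_⟩
    by_contra hcon
    push_neg at hcon
    exact absurd (le_trans (hmono k j hk hcon) hδ) (not_le.2 hj2)
  have h := Set.ncard_le_ncard hsub (Set.finite_Ico _ _)
  rw [myIco] at h; omega

lemma fwd (α : ℕ → ℝ) (γ : ℝ) (hγ : 0 < γ) (c : ℝ) (hc : 1 ≤ c)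
    (hb : ∀ k : ℕ, 1 ≤ k → (k:ℝ)^(-1/γ)/c ≤ α k ∧ α k ≤ c*(k:ℝ)^(-1/γ)) :
    ∀ δ : ℝ, 0 < δ → δ ≤ 1 →
      δ^(-γ)/(2*c^γ) ≤ (({k : ℕ | 1 ≤ k ∧ δ < α k}).ncard + 1 : ℝ) ∧
      (({k : ℕ | 1 ≤ k ∧ δ < α k}).ncard + 1 : ℝ) ≤ (2*c^γ) * δ^(-γ) := by
  intro δ hδ hδ1
  have hc0 : (0:ℝ) < c := lt_of_lt_of_le one_pos hc
  set S := {k : ℕ | 1 ≤ k ∧ δ < α k} with hS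
  have hkey : ∀ k ∈ S, (k:ℝ) < (c/δ)^γ := by
    rintro k ⟨hk1, hk2⟩
    have hkpos : (0:ℝ) < k := by exact_mod_cast hk1
    have hδlt : δ < c * (k:ℝ)^(-1/γ) := lt_of_lt_of_le hk2 (hb k hk1).2
    have hr : (k:ℝ)^(-1/γ) = ((k:ℝ)^(1/γ))⁻¹ := by
      rw [neg_div, Real.rpow_neg hkpos.le]
    have hpow : (0:ℝ) < (k:ℝ)^(1/γ) := Real.rpow_pos_of_pos hkpos _
    have hlt : (k:ℝ)^(1/γ) < c / δ := by
      rw [hr, ← div_eq_mul_inv] at hδlt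
      rw [lt_div_iff₀ hδ]
      have := (lt_div_iff₀ hpow).1 hδlt
      linarith [mul_comm δ ((k:ℝ)^(1/γ))]
    calc (k:ℝ) = ((k:ℝ)^(1/γ))^γ := (rpow_inv_rpow' hγ hkpos.le).symm
      _ < (c/δ)^γ := Real.rpow_lt_rpow hpow.le hlt hγ
  have hSsub : S ⊆ Set.Icc 1 ⌊(c/δ)^γ⌋₊ := fun k hk =>
    ⟨hk.1, Nat.le_floor (le_of_lt (hkey k hk))⟩
  have hfin : S.Finite := (Set.finite_Icc _ _).subset hSsub
  have hup : (S.ncard : ℝ) ≤ (c/δ)^γ := by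
    have h1 := Set.ncard_le_ncard hSsub (Set.finite_Icc _ _)
    rw [myIcc] at h1
    have h3 : S.ncard ≤ ⌊(c/δ)^γ⌋₊ := by omega
    exact le_trans (by exact_mod_cast h3) (Nat.floor_le (by positivity))
  have hcd : (c/δ)^γ = c^γ * δ^(-γ) := by
    rw [Real.div_rpow hc0.le hδ.le, Real.rpow_neg hδ.le, div_eq_mul_inv]
  have hδγ1 : (1:ℝ) ≤ δ^(-γ) :=
    Real.one_le_rpow_of_pos_of_le_one_of_nonpos hδ hδ1 (by linarith)
  have hcγ1 : (1:ℝ) ≤ c^γ := Real.one_le_rpow hc hγ.le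
  constructor
  · set T := (c*δ)^(-γ) with hT
    have hTpos : 0 < T := Real.rpow_pos_of_pos (by positivity) _
    have hceil1 : 1 ≤ ⌈T⌉₊ := Nat.ceil_pos.2 hTpos
    set m := ⌈T⌉₊ - 1 with hm
    have hmcast : (m:ℝ) = (⌈T⌉₊:ℝ) - 1 := by
      rw [hm, Nat.cast_sub hceil1]; norm_num
    have hmlt : (m:ℝ) < T := by
      have h1 : (⌈T⌉₊:ℝ) < T + 1 := Nat.ceil_lt_add_one hTpos.le
      linarith
    have hsub2 : Set.Icc 1 m ⊆ S := by
      rintro k ⟨hk1, hkm⟩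
      refine ⟨hk1, ?_⟩
      have hkpos : (0:ℝ) < k := by exact_mod_cast hk1
      have hkT : (k:ℝ) < T := lt_of_le_of_lt (by exact_mod_cast hkm) hmlt
      have hT1 : T^(1/γ) = (c*δ)⁻¹ := by
        rw [hT, ← Real.rpow_mul (by positivity : (0:ℝ) ≤ c*δ),
          show -γ * (1/γ) = -1 by field_simp, Real.rpow_neg_one]
      have hk1γ : (k:ℝ)^(1/γ) < (c*δ)⁻¹ := by
        rw [← hT1]
        exact Real.rpow_lt_rpow hkpos.le hkT (by positivity)
      have hpow : (0:ℝ) < (k:ℝ)^(1/γ) := Real.rpow_pos_of_pos hkpos _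
      have hcdpos : (0:ℝ) < c*δ := by positivity
      have h3 : c*δ < ((k:ℝ)^(1/γ))⁻¹ := by
        have hmul := mul_lt_mul_of_pos_right hk1γ hcdpos
        rw [inv_mul_cancel₀ hcdpos.ne'] at hmul
        rw [inv_eq_one_div, lt_div_iff₀ hpow]
        linarith [mul_comm ((k:ℝ)^(1/γ)) (c*δ)]
      have h4 : ((k:ℝ)^(1/γ))⁻¹ = (k:ℝ)^(-1/γ) := by
        rw [neg_div, Real.rpow_neg hkpos.le]
      rw [h4] at h3
      calc δ < (k:ℝ)^(-1/γ)/c := by rw [lt_div_iff₀ hc0]; linarith [mul_comm c δ]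
        _ ≤ α k := (hb k hk1).1
    have hlow : T ≤ (S.ncard : ℝ) + 1 := by
      have h1 := Set.ncard_le_ncard hsub2 hfin
      rw [myIcc] at h1
      have hm' : m ≤ S.ncard := by omega
      have hTle : T ≤ (m:ℝ) + 1 := by
        have := Nat.le_ceil T
        linarith
      have : (m:ℝ) ≤ S.ncard := by exact_mod_cast hm'
      linarith
    have hTval : T = c^(-γ) * δ^(-γ) := by
      rw [hT, Real.mul_rpow hc0.le hδ.le]
    refine le_trans ?_ hlow
    rw [hTval, Real.rpow_neg hc0.le]
    rw [div_eq_inv_mul]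
    have hinv : (2*c^γ)⁻¹ ≤ (c^γ)⁻¹ := by
      apply inv_anti₀ (by positivity)
      nlinarith
    apply mul_le_mul_of_nonneg_right hinv (by positivity)
  · calc (S.ncard:ℝ)+1 ≤ (c/δ)^γ + 1 := by linarith
      _ = c^γ*δ^(-γ) + 1 := by rw [hcd]
      _ ≤ (2*c^γ) * δ^(-γ) := by nlinarith

set_option maxHeartbeats 1000000 in
lemma bwd (α : ℕ → ℝ) (γ : ℝ) (hγ : 0 < γ)
    (hpos : ∀ k, 1 ≤ k → 0 < α k) (hmono : ∀ k l, 1 ≤ k → k ≤ l → α l ≤ α k)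
    (c δ₀ : ℝ) (hc : 1 ≤ c) (hδ₀ : 0 < δ₀)
    (hb : ∀ δ : ℝ, 0 < δ → δ ≤ δ₀ →
      δ^(-γ)/c ≤ (({k : ℕ | 1 ≤ k ∧ δ < α k}).ncard + 1 : ℝ) ∧
      (({k : ℕ | 1 ≤ k ∧ δ < α k}).ncard + 1 : ℝ) ≤ c * δ^(-γ)) :
    ∃ c' : ℝ, 1 ≤ c' ∧ ∀ k : ℕ, 1 ≤ k →
      (k:ℝ)^(-1/γ)/c' ≤ α k ∧ α k ≤ c'*(k:ℝ)^(-1/γ) := by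
  have hc0 : (0:ℝ) < c := lt_of_lt_of_le one_pos hc
  set δ₁ := min δ₀ 1 with hδ₁def
  have hδ₁ : 0 < δ₁ := lt_min hδ₀ one_pos
  have hδ₁1 : δ₁ ≤ 1 := min_le_right _ _
  have hδ₁0 : δ₁ ≤ δ₀ := min_le_left _ _
  have hb' : ∀ δ : ℝ, 0 < δ → δ ≤ δ₁ →
      δ^(-γ)/c ≤ (({k : ℕ | 1 ≤ k ∧ δ < α k}).ncard + 1 : ℝ) ∧
      (({k : ℕ | 1 ≤ k ∧ δ < α k}).ncard + 1 : ℝ) ≤ c * δ^(-γ) :=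
    fun δ h1 h2 => hb δ h1 (le_trans h2 hδ₁0)
  -- finiteness
  have hfin : ∀ δ : ℝ, 0 < δ → ({k : ℕ | 1 ≤ k ∧ δ < α k}).Finite := by
    intro δ hδ
    by_contra hinf
    set a := (2*c)^(-(1/γ)) with ha
    have hapos : 0 < a := Real.rpow_pos_of_pos (by positivity) _
    set δ' := min δ (min δ₁ a) with hδ'
    have hδ'pos : 0 < δ' := lt_min hδ (lt_min hδ₁ hapos)
    have hδ'1 : δ' ≤ δ₁ := le_trans (min_le_right _ _) (min_le_left _ _)
    have hδ'a : δ' ≤ a := le_trans (min_le_right _ _) (min_le_right _ _)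
    have hpow2c : a^(-γ) = 2*c := by
      rw [ha, ← Real.rpow_mul (by positivity : (0:ℝ) ≤ 2*c),
        show -(1/γ) * -γ = 1 by field_simp, Real.rpow_one]
    have hge : 2*c ≤ δ'^(-γ) := by
      rw [← hpow2c]
      exact Real.rpow_le_rpow_of_nonpos hδ'pos hδ'a (by linarith)
    have hsub : {k : ℕ | 1 ≤ k ∧ δ < α k} ⊆ {k : ℕ | 1 ≤ k ∧ δ' < α k} :=
      fun k hk => ⟨hk.1, lt_of_le_of_lt (min_le_left _ _) hk.2⟩
    have hSinf : ({k : ℕ | 1 ≤ k ∧ δ' < α k}).Infinite :=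
      Set.Infinite.mono hsub hinf
    have hzero : ({k : ℕ | 1 ≤ k ∧ δ' < α k}).ncard = 0 := hSinf.ncard
    have h1 := (hb' δ' hδ'pos hδ'1).1
    rw [hzero] at h1
    rw [div_le_iff₀ hc0] at h1
    push_cast at h1
    nlinarith
  -- the bound K for large gaps
  set K := c * δ₁^(-γ) with hK
  have hδ₁γ : (1:ℝ) ≤ δ₁^(-γ) :=
    Real.one_le_rpow_of_pos_of_le_one_of_nonpos hδ₁ hδ₁1 (by linarith)
  have hK1 : (1:ℝ) ≤ K := by nlinarith
  have hKpos : (0:ℝ) < K := lt_of_lt_of_le one_pos hK1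
  have hbig : ∀ k : ℕ, 1 ≤ k → δ₁ < α k → (k:ℝ) + 1 ≤ K := by
    intro k hk1 hk2
    have h1 := L1' hmono (hfin δ₁ hδ₁) hk1 hk2
    have h2 := (hb' δ₁ hδ₁ le_rfl).2
    have h1' : (k:ℝ) ≤ (({j : ℕ | 1 ≤ j ∧ δ₁ < α j}).ncard : ℝ) := by exact_mod_cast h1
    rw [hK]; linarith
  have hα1pos : 0 < α 1 := hpos 1 le_rfl
  set c' := max (2 * c^(1/γ)) (max (α 1 * K^(1/γ)) (1/δ₁)) with hc'
  have hδ₁inv : (1:ℝ) ≤ 1/δ₁ := by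
    rw [le_div_iff₀ hδ₁]; linarith
  have hc'1 : (1:ℝ) ≤ c' :=
    le_trans hδ₁inv (le_trans (le_max_right _ _) (le_max_right _ _))
  have hc'pos : (0:ℝ) < c' := lt_of_lt_of_le one_pos hc'1
  have hcγpos : (0:ℝ) < c^(1/γ) := Real.rpow_pos_of_pos hc0 _
  have hc'a : c^(1/γ) ≤ c' := le_trans (by linarith : c^(1/γ) ≤ 2*c^(1/γ)) (le_max_left _ _)
  refine ⟨c', hc'1, fun k hk1 => ?_⟩
  have hkpos : (0:ℝ) < k := by exact_mod_cast hk1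
  have hαk : 0 < α k := hpos k hk1
  have hnegdiv : (-1/γ : ℝ) = -(1/γ) := by rw [neg_div]
  have hkinv : (k:ℝ)^(-1/γ) = ((k:ℝ)^(1/γ))⁻¹ := by
    rw [hnegdiv, Real.rpow_neg hkpos.le]
  have hkpow : (0:ℝ) < (k:ℝ)^(1/γ) := Real.rpow_pos_of_pos hkpos _
  constructor
  · -- lower bound
    by_cases h : α k ≤ δ₁
    · have hb2 := (hb' (α k) hαk h).1
      have hL2 := L2' hmono hk1 (le_refl (α k))
      have hL2' : (({j : ℕ | 1 ≤ j ∧ α k < α j}).ncard : ℝ) + 1 ≤ k := by exact_mod_cast hL2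
      have h1 : (α k)^(-γ) ≤ c * k := by
        rw [div_le_iff₀ hc0] at hb2
        nlinarith
      have hαγ : (0:ℝ) < (α k)^γ := Real.rpow_pos_of_pos hαk _
      have hck : (0:ℝ) < c * k := by positivity
      have h2 : (c*(k:ℝ))⁻¹ ≤ (α k)^γ := by
        rw [Real.rpow_neg hαk.le] at h1
        have hmul := mul_le_mul_of_nonneg_right h1 hαγ.le
        rw [inv_mul_cancel₀ hαγ.ne'] at hmul
        rw [inv_eq_one_div, div_le_iff₀ hck]
        linarith [mul_comm (c*(k:ℝ)) ((α k)^γ)]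
      have h3 : ((c*(k:ℝ))⁻¹)^(1/γ) ≤ α k := by
        have := Real.rpow_le_rpow (by positivity) h2 (by positivity : (0:ℝ) ≤ 1/γ)
        rwa [rpow_rpow_inv' hγ hαk.le] at this
      have h4 : ((c*(k:ℝ))⁻¹)^(1/γ) = (k:ℝ)^(-1/γ) / c^(1/γ) := by
        rw [← Real.rpow_neg_one (c*(k:ℝ)),
          ← Real.rpow_mul hck.le,
          show (-1 : ℝ) * (1/γ) = -(1/γ) by ring,
          Real.rpow_neg (by positivity : (0:ℝ) ≤ c*(k:ℝ)),
          Real.mul_rpow hc0.le hkpos.le, mul_inv,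
          ← Real.rpow_neg hkpos.le, ← hnegdiv]
        ring
      have h5 : (k:ℝ)^(-1/γ)/c' ≤ (k:ℝ)^(-1/γ)/c^(1/γ) := by
        apply div_le_div_of_nonneg_left (by positivity) hcγpos hc'a
      rw [h4] at h3
      linarith
    · push_neg at h
      have hkr : (k:ℝ)^(-1/γ) ≤ 1 := by
        rw [hnegdiv]
        exact Real.rpow_le_one_of_one_le_of_nonpos (by exact_mod_cast hk1) (neg_nonpos.2 (by positivity))
      have hstep : 1/c' ≤ δ₁ := by
        rw [div_le_iff₀ hc'pos]
        have : 1/δ₁ ≤ c' := le_trans (le_max_right _ _) (le_max_right _ _)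
        rw [div_le_iff₀ hδ₁] at this
        linarith [mul_comm c' δ₁]
      calc (k:ℝ)^(-1/γ)/c' ≤ 1/c' := by gcongr
        _ ≤ δ₁ := hstep
        _ ≤ α k := h.le
  · -- upper bound
    by_cases h : α k / 2 ≤ δ₁
    · set δ := α k / 2 with hδdef
      have hδpos : 0 < δ := by positivity
      have hδlt : δ < α k := by rw [hδdef]; linarith
      have hL1 := L1' hmono (hfin δ hδpos) hk1 hδlt
      have hb2 := (hb' δ hδpos h).2
      have hL1' : (k:ℝ) ≤ (({j : ℕ | 1 ≤ j ∧ δ < α j}).ncard : ℝ) := by exact_mod_cast hL1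
      have h1 : (k:ℝ) < c * δ^(-γ) := by linarith
      have hδγ : (0:ℝ) < δ^γ := Real.rpow_pos_of_pos hδpos _
      have h2 : δ^γ < c / k := by
        rw [Real.rpow_neg hδpos.le, ← div_eq_mul_inv] at h1
        have := (lt_div_iff₀ hδγ).1 h1
        rw [lt_div_iff₀ hkpos]
        linarith [mul_comm (k:ℝ) (δ^γ)]
      have h3 : δ < (c/(k:ℝ))^(1/γ) := by
        have := Real.rpow_lt_rpow hδγ.le h2 (by positivity : (0:ℝ) < 1/γ)
        rwa [rpow_rpow_inv' hγ hδpos.le] at this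
      have h4 : (c/(k:ℝ))^(1/γ) = c^(1/γ) * (k:ℝ)^(-1/γ) := by
        rw [Real.div_rpow hc0.le hkpos.le, hkinv, div_eq_mul_inv]
      have h6 : 2*c^(1/γ) ≤ c' := le_max_left _ _
      have hknn : (0:ℝ) ≤ (k:ℝ)^(-1/γ) := by positivity
      have h5 : α k < 2*c^(1/γ) * (k:ℝ)^(-1/γ) := by
        rw [h4] at h3
        rw [hδdef] at h3
        nlinarith
      nlinarith [mul_le_mul_of_nonneg_right h6 hknn]
    · push_neg at h
      have hbig' := hbig k hk1 (by linarith)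
      have hkK : (k:ℝ) ≤ K := by linarith
      have hα1 : α k ≤ α 1 := hmono 1 k le_rfl hk1
      have h7 : (1:ℝ) ≤ K^(1/γ) * (k:ℝ)^(-1/γ) := by
        have hkK' : (k:ℝ)^(1/γ) ≤ K^(1/γ) := Real.rpow_le_rpow hkpos.le hkK (by positivity)
        rw [hkinv, ← div_eq_mul_inv, le_div_iff₀ hkpow, one_mul]
        exact hkK'
      have h8 : α k ≤ (α 1 * K^(1/γ)) * (k:ℝ)^(-1/γ) := by
        calc α k ≤ α 1 := hα1
          _ = α 1 * 1 := (mul_one _).symm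
          _ ≤ α 1 * (K^(1/γ) * (k:ℝ)^(-1/γ)) := mul_le_mul_of_nonneg_left h7 hα1pos.le
          _ = (α 1 * K^(1/γ)) * (k:ℝ)^(-1/γ) := by ring
      have h9 : α 1 * K^(1/γ) ≤ c' := le_trans (le_max_left _ _) (le_max_right _ _)
      have hknn : (0:ℝ) ≤ (k:ℝ)^(-1/γ) := by positivity
      calc α k ≤ (α 1 * K^(1/γ)) * (k:ℝ)^(-1/γ) := h8
        _ ≤ c' * (k:ℝ)^(-1/γ) := mul_le_mul_of_nonneg_right h9 hknn

/-- for a compact (infinite) metric space `A` with gap sequence `α` and `γ > 0`: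
`α k ≍ k ^ (-1/γ)` if and only if `𝔑(δ, A) ≍ δ ^ (-γ)` for all sufficiently small `δ > 0`. -/
theorem gap_seq_asymp_iff_nclass_asymp {X : Type*} [MetricSpace X] (A : Set X)
    (hA : IsCompact A) (hinf : A.Infinite) (α : ℕ → ℝ) (hα : IsGapSeq A α)
    (γ : ℝ) (hγ : 0 < γ) :
    (∃ c : ℝ, 1 ≤ c ∧ ∀ k : ℕ, 1 ≤ k →
      (k : ℝ) ^ (-1 / γ) / c ≤ α k ∧ α k ≤ c * (k : ℝ) ^ (-1 / γ)) ↔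
    (∃ c : ℝ, 1 ≤ c ∧ ∃ δ₀ > (0 : ℝ), ∀ δ : ℝ, 0 < δ → δ ≤ δ₀ →
      δ ^ (-γ) / c ≤ (NClass δ A : ℝ) ∧ (NClass δ A : ℝ) ≤ c * δ ^ (-γ)) := by
  obtain ⟨hpos, hmono, hN⟩ := hα
  have hcast : ∀ δ : ℝ, 0 < δ →
      (NClass δ A : ℝ) = (({k : ℕ | 1 ≤ k ∧ δ < α k}).ncard : ℝ) + 1 := by
    intro δ hδ
    rw [hN δ hδ]; push_cast; ring
  constructor
  · rintro ⟨c, hc, hbd⟩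
    have hcγ1 : (1:ℝ) ≤ c^γ := Real.one_le_rpow hc hγ.le
    refine ⟨2*c^γ, by linarith, 1, one_pos, fun δ h1 h2 => ?_⟩
    rw [hcast δ h1]
    exact fwd α γ hγ c hc hbd δ h1 h2
  · rintro ⟨c, hc, δ₀, hδ₀, hbd⟩
    exact bwd α γ hγ hpos hmono c δ₀ hc hδ₀ (fun δ h1 h2 => by
      rw [← hcast δ h1]; exact hbd δ h1 h2)
end

section
/- Let F ⊆ [0,1] be the self-similar set generated by the maps φ_i(y) = b_i y + d_i for i ∈ 𝓘 ⊆ {1,…,m}, where 0 < b_i < 1, d_1 = 0, d_i = b_1 + ⋯ + b_{i−1}, and ∑_{i=1}^m b_i = 1. Suppose 𝓘 ≠ {1,…,m}, i.e., there exists some i with n_i = 0, so that some open interval I ⊆ [0,1] satisfies I ∩ F = ∅. For δ > 0, let 𝓘_δ be the set of words i₁…i_k over 𝓘 with b_{i₁}⋯b_{i_k} ≤ δ < b_{i₁}⋯b_{i_{k−1}}, and say w, w' ∈ 𝓘_δ are δ-connected if there is a chain w = w₀, w₁, …, w_n = w' in 𝓘_δ with dist(φ_{w_ℓ}(F), φ_{w_{ℓ+1}}(F))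 ≤ δ for all ℓ. Then sup over δ > 0 and w ∈ 𝓘_δ of the number of words δ-connected to w is finite; in fact it is at most 2 η^{-1} b_*^{-2}, where η = |I| and b_* = min_i b_i. -/
/-- Composition `φ_w = φ_{i₁} ∘ ⋯ ∘ φ_{i_ℓ}` of the maps `φ_i (y) = b i * y + dd i`
along a finite word `w`. -/
def phiWord {m : ℕ} (b dd : Fin m → ℝ) : List (Fin m) → ℝ → ℝ
  | [] => id
  | i :: w => fun y => b i * phiWord b dd w y + dd i

/-- The distance `dist(A, B) = inf {|a - b| : a ∈ A, b ∈ B}` between two sets of reals. -/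
noncomputable def setDist (A B : Set ℝ) : ℝ := sInf (Set.image2 dist A B)

/-- The `δ`-stopping words over the alphabet `I`:
`𝓘_δ = {i₁…i_k : b_{i₁}⋯b_{i_k} ≤ δ < b_{i₁}⋯b_{i_{k-1}}}`. -/
def IdxDelta {m : ℕ} (b : Fin m → ℝ) (I : Finset (Fin m)) (δ : ℝ) : Set (List (Fin m)) :=
  {w | w ≠ [] ∧ (∀ i ∈ w, i ∈ I) ∧ (w.map b).prod ≤ δ ∧ δ < (w.dropLast.map b).prod}

/-- `w` and `w'` in `𝓘_δ` are `δ`-connected: there is a chain `w = g 0, …, g k = w'` in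
`𝓘_δ` with `dist(φ_{g l}(F), φ_{g (l+1)}(F)) ≤ δ` for all `l`. -/
def DeltaConn {m : ℕ} (b dd : Fin m → ℝ) (I : Finset (Fin m)) (F : Set ℝ) (δ : ℝ)
    (w w' : List (Fin m)) : Prop :=
  ∃ (k : ℕ) (g : ℕ → List (Fin m)), g 0 = w ∧ g k = w' ∧
    (∀ l ≤ k, g l ∈ IdxDelta b I δ) ∧
    ∀ l < k, setDist (phiWord b dd (g l) '' F) (phiWord b dd (g (l + 1)) '' F) ≤ δ


namespace DCaux

variable {m : ℕ} (b dd : Fin m → ℝ)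

lemma phiWord_eq (w : List (Fin m)) (y : ℝ) :
    phiWord b dd w y = (w.map b).prod * y + phiWord b dd w 0 := by
  induction w generalizing y with
  | nil => simp [phiWord]
  | cons i t ih =>
    simp only [phiWord, List.map_cons, List.prod_cons]
    rw [ih y, ih 0]; ring

lemma phiWord_append (w1 w2 : List (Fin m)) (y : ℝ) :
    phiWord b dd (w1 ++ w2) y = phiWord b dd w1 (phiWord b dd w2 y) := by
  induction w1 with
  | nil => simp [phiWord]
  | cons i t ih => simp [phiWord, ih]

variable (hb : ∀ i, 0 < b i) (hbs : ∑ i, b i = 1)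
  (hd : ∀ i, dd i = ∑ k ∈ Finset.univ.filter (fun k => k < i), b k)

include hb hbs in
lemma b_le_one (i : Fin m) : b i ≤ 1 := by
  rw [← hbs]
  exact Finset.single_le_sum (fun j _ => (hb j).le) (Finset.mem_univ i)

include hb hd in
lemma dd_nonneg (i : Fin m) : 0 ≤ dd i := by
  rw [hd]; exact Finset.sum_nonneg fun j _ => (hb j).le

include hb hbs hd in
lemma dd_add_b_le_one (i : Fin m) : dd i + b i ≤ 1 := by
  rw [hd, ← hbs]
  have hni : i ∉ Finset.univ.filter (fun k => k < i) := by simp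
  calc (∑ k ∈ Finset.univ.filter (fun k => k < i), b k) + b i
      = ∑ k ∈ insert i (Finset.univ.filter (fun k => k < i)), b k := by
        rw [Finset.sum_insert hni]; ring
    _ ≤ ∑ i, b i := Finset.sum_le_sum_of_subset_of_nonneg
        (Finset.subset_univ _) (fun j _ _ => (hb j).le)

include hb hd in
lemma sep_letter {i j : Fin m} (hij : i < j) : dd i + b i ≤ dd j := by
  rw [hd, hd]
  have hni : i ∉ Finset.univ.filter (fun k => k < i) := by simp
  calc (∑ k ∈ Finset.univ.filter (fun k => k < i), b k) + b i
      = ∑ k ∈ insert i (Finset.univ.filter (fun k => k < i)), b k := by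
        rw [Finset.sum_insert hni]; ring
    _ ≤ ∑ k ∈ Finset.univ.filter (fun k => k < j), b k := by
        apply Finset.sum_le_sum_of_subset_of_nonneg
        · intro k hk
          simp only [Finset.mem_insert, Finset.mem_filter, Finset.mem_univ, true_and] at hk ⊢
          rcases hk with rfl | hk
          · exact hij
          · exact hk.trans hij
        · exact fun j _ _ => (hb j).le

include hb in
lemma prod_pos (w : List (Fin m)) : 0 < (w.map b).prod := by
  apply List.prod_pos
  intro x hx
  simp only [List.mem_map] at hx
  obtain ⟨i, -, rfl⟩ := hx
  exact hb i

include hb hbs in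
lemma prod_le_one (w : List (Fin m)) : (w.map b).prod ≤ 1 := by
  induction w with
  | nil => simp
  | cons i t ih =>
    simp only [List.map_cons, List.prod_cons]
    exact mul_le_one₀ (b_le_one b hb hbs i) (prod_pos b hb t).le ih

include hb hbs hd in
lemma phiWord_mem_Icc (w : List (Fin m)) {x : ℝ} (hx : x ∈ Set.Icc (0:ℝ) 1) :
    phiWord b dd w x ∈ Set.Icc (0:ℝ) 1 := by
  induction w with
  | nil => simpa [phiWord]
  | cons i t ih =>
    simp only [phiWord, Set.mem_Icc] at ih ⊢
    constructor
    · have := dd_nonneg b dd hb hd i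
      nlinarith [(hb i).le, ih.1]
    · have := dd_add_b_le_one b dd hb hbs hd i
      nlinarith [(hb i).le, ih.2]

end DCaux

namespace DCaux

variable {m : ℕ} (b dd : Fin m → ℝ)
variable (hb : ∀ i, 0 < b i) (hbs : ∑ i, b i = 1)
  (hd : ∀ i, dd i = ∑ k ∈ Finset.univ.filter (fun k => k < i), b k)

include hb hbs hd in
/-- Interior-disjointness of cylinders for non-prefix-comparable words. -/
lemma word_sep : ∀ (w1 w2 : List (Fin m)), ¬ (w1 <+: w2) → ¬ (w2 <+: w1) →
    phiWord b dd w1 1 ≤ phiWord b dd w2 0 ∨ phiWord b dd w2 1 ≤ phiWord b dd w1 0 := by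
  intro w1
  induction w1 with
  | nil => intro w2 h1 _; exact absurd (List.nil_prefix) h1
  | cons i t1 ih =>
    intro w2 h1 h2
    match w2 with
    | [] => exact absurd (List.nil_prefix) h2
    | j :: t2 =>
      rcases lt_trichotomy i j with hij | rfl | hij
      · left
        have ht1 : phiWord b dd t1 1 ≤ 1 :=
          (phiWord_mem_Icc b dd hb hbs hd t1 (by norm_num)).2
        have ht2 : 0 ≤ phiWord b dd t2 0 :=
          (phiWord_mem_Icc b dd hb hbs hd t2 (by norm_num)).1
        have hsep := sep_letter b dd hb hd hij
        show b i * phiWord b dd t1 1 + dd i ≤ b j * phiWord b dd t2 0 + dd j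
        nlinarith [(hb i).le, (hb j).le]
      · have h1' : ¬ (t1 <+: t2) := fun h => h1 (List.cons_prefix_cons.2 ⟨rfl, h⟩)
        have h2' : ¬ (t2 <+: t1) := fun h => h2 (List.cons_prefix_cons.2 ⟨rfl, h⟩)
        rcases ih t2 h1' h2' with h | h
        · left
          show b i * phiWord b dd t1 1 + dd i ≤ b i * phiWord b dd t2 0 + dd i
          nlinarith [hb i]
        · right
          show b i * phiWord b dd t2 1 + dd i ≤ b i * phiWord b dd t1 0 + dd i
          nlinarith [hb i]
      · right
        have ht2 : phiWord b dd t2 1 ≤ 1 :=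
          (phiWord_mem_Icc b dd hb hbs hd t2 (by norm_num)).2
        have ht1 : 0 ≤ phiWord b dd t1 0 :=
          (phiWord_mem_Icc b dd hb hbs hd t1 (by norm_num)).1
        have hsep := sep_letter b dd hb hd hij
        show b j * phiWord b dd t2 1 + dd j ≤ b i * phiWord b dd t1 0 + dd i
        nlinarith [(hb i).le, (hb j).le]

variable (I : Finset (Fin m)) (F : Set ℝ)
variable (hF01 : F ⊆ Set.Icc 0 1)
  (hFattr : F = ⋃ i ∈ I, (fun y => b i * y + dd i) '' F)

include hFattr in
lemma phiWord_mem_F (w : List (Fin m)) (hw : ∀ i ∈ w, i ∈ I) {x : ℝ} (hx : x ∈ F) :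
    phiWord b dd w x ∈ F := by
  induction w with
  | nil => simpa [phiWord]
  | cons i t ih =>
    have hi : i ∈ I := hw i List.mem_cons_self
    have ht : phiWord b dd t x ∈ F := ih (fun j hj => hw j (List.mem_cons_of_mem i hj))
    show b i * phiWord b dd t x + dd i ∈ F
    rw [hFattr]
    exact Set.mem_biUnion hi ⟨_, ht, rfl⟩

variable (u v : ℝ) (hu : 0 ≤ u) (hv : v ≤ 1) (huv : u < v)
  (hgapF : Set.Ioo u v ∩ F = ∅)

include hb hbs hd hF01 hFattr hu hv huv hgapF in
/-- The image of the gap under any word over `I` misses `F`. -/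
lemma gap_lemma : ∀ (w : List (Fin m)), (∀ i ∈ w, i ∈ I) →
    ∀ x ∈ F, x ∉ Set.Ioo (phiWord b dd w u) (phiWord b dd w v) := by
  intro w
  induction w with
  | nil =>
    intro _ x hxF hxI
    have : x ∈ Set.Ioo u v ∩ F := ⟨by simpa [phiWord] using hxI, hxF⟩
    rw [hgapF] at this; exact this
  | cons i t ih =>
    intro hw x hxF hxI
    have hi : i ∈ I := hw i List.mem_cons_self
    have htu : phiWord b dd t u ∈ Set.Icc (0:ℝ) 1 :=
      phiWord_mem_Icc b dd hb hbs hd t ⟨hu, le_of_lt (lt_of_lt_of_le huv hv)⟩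
    have htv : phiWord b dd t v ∈ Set.Icc (0:ℝ) 1 :=
      phiWord_mem_Icc b dd hb hbs hd t ⟨le_of_lt (lt_of_le_of_lt hu huv), hv⟩
    simp only [phiWord, Set.mem_Ioo] at hxI
    rw [hFattr] at hxF
    simp only [Set.mem_iUnion, Set.mem_image] at hxF
    obtain ⟨j, hj, y, hyF, hxy⟩ := hxF
    have hy01 : y ∈ Set.Icc (0:ℝ) 1 := hF01 hyF
    rcases lt_trichotomy j i with hji | hji | hji
    · have := sep_letter b dd hb hd hji
      nlinarith [(hb i).le, (hb j).le, htu.1, hy01.2]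
    · subst hji
      have hy : phiWord b dd t u < y ∧ y < phiWord b dd t v := by
        constructor <;> nlinarith [hb j]
      exact ih (fun k hk => hw k (List.mem_cons_of_mem j hk)) y hyF ⟨hy.1, hy.2⟩
    · have := sep_letter b dd hb hd hji
      nlinarith [(hb i).le, (hb j).le, htv.2, hy01.1]

end DCaux

namespace DCaux
open scoped ENNReal

lemma setDist_comm (A B : Set ℝ) : setDist A B = setDist B A := by
  unfold setDist
  congr 1
  ext d
  constructor
  · rintro ⟨a, ha, c, hc, rfl⟩
    exact ⟨c, hc, a, ha, dist_comm c a⟩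
  · rintro ⟨a, ha, c, hc, rfl⟩
    exact ⟨c, hc, a, ha, dist_comm c a⟩

lemma setDist_ge {A B : Set ℝ} (hA : A.Nonempty) (hB : B.Nonempty) {l r : ℝ}
    (hAl : ∀ a ∈ A, a ≤ l) (hBr : ∀ x ∈ B, r ≤ x) : r - l ≤ setDist A B := by
  unfold setDist
  apply le_csInf
  · obtain ⟨a, ha⟩ := hA; obtain ⟨x, hx⟩ := hB
    exact ⟨dist a x, Set.mem_image2_of_mem ha hx⟩
  · rintro d ⟨a, ha, x, hx, rfl⟩
    have h1 : a ≤ l := hAl a ha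
    have h2 : r ≤ x := hBr x hx
    calc r - l ≤ x - a := by linarith
      _ ≤ |x - a| := le_abs_self _
      _ = dist a x := by rw [Real.dist_eq, abs_sub_comm]

/-- Counting lemma: finitely many interior-disjoint intervals of length `≥ c`
inside `[L, R]` number at most `(R - L) / c`. -/
lemma count_lemma {α : Type*} (T : Finset α) (f g : α → ℝ) (c L R : ℝ) (hc : 0 < c)
    (hLR : L ≤ R) (hlen : ∀ a ∈ T, c ≤ g a - f a) (hsub : ∀ a ∈ T, L ≤ f a ∧ g a ≤ R)
    (hdisj : ∀ a ∈ T, ∀ a' ∈ T, a ≠ a' → g a ≤ f a' ∨ g a' ≤ f a) :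
    (T.card : ℝ) * c ≤ R - L := by
  have hpd : (↑T : Set α).PairwiseDisjoint (fun a => Set.Ioo (f a) (g a)) := by
    intro a ha a' ha' hne
    rcases hdisj a ha a' ha' hne with h | h
    · apply Set.disjoint_left.2
      rintro x ⟨_, hx2⟩ ⟨hx3, _⟩; linarith
    · apply Set.disjoint_left.2
      rintro x ⟨hx1, _⟩ ⟨_, hx4⟩; linarith
  have key : (T.card : ℝ≥0∞) * ENNReal.ofReal c ≤ ENNReal.ofReal (R - L) := by
    calc (T.card : ℝ≥0∞) * ENNReal.ofReal c = T.card • ENNReal.ofReal c := by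
          rw [nsmul_eq_mul]
      _ ≤ ∑ a ∈ T, ENNReal.ofReal (g a - f a) := by
          apply Finset.card_nsmul_le_sum
          intro a ha
          exact ENNReal.ofReal_le_ofReal (hlen a ha)
      _ = ∑ a ∈ T, MeasureTheory.volume (Set.Ioo (f a) (g a)) := by
          simp [Real.volume_Ioo]
      _ = MeasureTheory.volume (⋃ a ∈ T, Set.Ioo (f a) (g a)) :=
          (MeasureTheory.measure_biUnion_finset hpd fun a _ => measurableSet_Ioo).symm
      _ ≤ MeasureTheory.volume (Set.Icc L R) := by
          apply MeasureTheory.measure_mono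
          intro x hx
          simp only [Set.mem_iUnion] at hx
          obtain ⟨a, ha, hx1, hx2⟩ := hx
          exact ⟨(hsub a ha).1.trans hx1.le, hx2.le.trans (hsub a ha).2⟩
      _ = ENNReal.ofReal (R - L) := Real.volume_Icc
  rw [← ENNReal.ofReal_natCast T.card, ← ENNReal.ofReal_mul (by positivity)] at key
  exact (ENNReal.ofReal_le_ofReal_iff (by linarith)).1 key

variable {m : ℕ} (b : Fin m → ℝ) (I : Finset (Fin m))

/-- Uniform structure of stopping words at scale `δ`. -/
def Stop (δ : ℝ) (w : List (Fin m)) : Prop :=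
  w ≠ [] ∧ (∀ i ∈ w, i ∈ I) ∧ (w.map b).prod ≤ δ ∧
    ∀ k < w.length, δ < ((w.take k).map b).prod

variable (hb : ∀ i, 0 < b i) (hbs : ∑ i, b i = 1)

include hb hbs in
lemma prod_prefix_le {w1 w2 : List (Fin m)} (h : w1 <+: w2) :
    (w2.map b).prod ≤ (w1.map b).prod := by
  obtain ⟨r, rfl⟩ := h
  rw [List.map_append, List.prod_append]
  nlinarith [prod_pos b hb w1, prod_pos b hb r, prod_le_one b hb hbs r,
    (prod_pos b hb w1).le]

include hb hbs in
lemma idx_stop {δ : ℝ} {w : List (Fin m)} (hw : w ∈ IdxDelta b I δ) : Stop b I δ w := by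
  obtain ⟨hne, hmem, hle, hgt⟩ := hw
  refine ⟨hne, hmem, hle, ?_⟩
  intro k hk
  have hk' : k ≤ w.length - 1 := by omega
  have hpre : w.take k <+: w.dropLast := by
    rw [List.dropLast_eq_take]
    have h0 : (w.take (w.length - 1)).take k = w.take k := by
      rw [List.take_take]
      congr 1
      omega
    exact ⟨(w.take (w.length - 1)).drop k, by rw [← h0, List.take_append_drop]⟩
  calc δ < ((w.dropLast).map b).prod := hgt
    _ ≤ ((w.take k).map b).prod := prod_prefix_le b hb hbs hpre

lemma stop_not_prefix {δ : ℝ} {w1 w2 : List (Fin m)} (h1 : Stop b I δ w1)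
    (h2 : Stop b I δ w2) (hne : w1 ≠ w2) : ¬ (w1 <+: w2) := by
  intro hpre
  have hlt : w1.length < w2.length := by
    rcases lt_or_eq_of_le hpre.length_le with h | h
    · exact h
    · exact absurd (List.prefix_iff_eq_take.1 hpre ▸ (by rw [h, List.take_length])) hne
  have := h2.2.2.2 w1.length hlt
  rw [← List.prefix_iff_eq_take.1 hpre] at this
  exact absurd h1.2.2.1 (not_le.2 this)

end DCaux

namespace DCaux

variable {m : ℕ} (b dd : Fin m → ℝ) (I : Finset (Fin m))
variable (hb : ∀ i, 0 < b i) (hbs : ∑ i, b i = 1)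
  (hd : ∀ i, dd i = ∑ k ∈ Finset.univ.filter (fun k => k < i), b k)

include hb in
lemma phiWord_mono (w : List (Fin m)) {x y : ℝ} (h : x ≤ y) :
    phiWord b dd w x ≤ phiWord b dd w y := by
  rw [phiWord_eq b dd w x, phiWord_eq b dd w y]
  nlinarith [prod_pos b hb w]

include hb hbs hd in
lemma ext_bounds (W r : List (Fin m)) :
    phiWord b dd W 0 ≤ phiWord b dd (W ++ r) 0 ∧
      phiWord b dd (W ++ r) 1 ≤ phiWord b dd W 1 := by
  have h0 : phiWord b dd r 0 ∈ Set.Icc (0:ℝ) 1 :=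
    phiWord_mem_Icc b dd hb hbs hd r (by norm_num)
  have h1 : phiWord b dd r 1 ∈ Set.Icc (0:ℝ) 1 :=
    phiWord_mem_Icc b dd hb hbs hd r (by norm_num)
  rw [phiWord_append, phiWord_append]
  exact ⟨phiWord_mono b dd hb W h0.1, phiWord_mono b dd hb W h1.2⟩

include hb in
lemma stop_prod_gt {δ c : ℝ} (hδ : 0 < δ) (hc : 0 < c) (hcb : ∀ i, c ≤ b i)
    {w : List (Fin m)} (h : Stop b I δ w) : c * δ < (w.map b).prod := by
  obtain ⟨hne, -, -, hmin⟩ := h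
  have hl : 0 < w.length := List.length_pos_iff.2 hne
  have hi : w.length - 1 < w.length := by omega
  have hmap : w.length - 1 < (w.map b).length := by simpa using hi
  have key := List.prod_take_succ (w.map b) (w.length - 1) hmap
  have hn : w.length - 1 + 1 = w.length := by omega
  rw [hn] at key
  have htl : (w.map b).take w.length = w.map b := List.take_of_length_le (by simp)
  rw [htl] at key
  have hmt : (w.map b).take (w.length - 1) = (w.take (w.length - 1)).map b := by
    rw [List.map_take]
  rw [hmt, List.getElem_map] at key
  have h1 : δ < ((w.take (w.length - 1)).map b).prod := hmin _ hi
  have h2 : c ≤ b (w[w.length - 1]'hi) := hcb _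
  have h3 : 0 < b (w[w.length - 1]'hi) := hb _
  rw [key]
  nlinarith

end DCaux

open DCaux

set_option maxHeartbeats 1000000

/-- if the self-similar projection set `F = ⋃_{i ∈ 𝓘} φ_i(F)` (with
`𝓘 ⊊ {1,…,m}`) misses the open interval `(u, v) ⊆ [0,1]`, then for every `δ > 0` and every
`w ∈ 𝓘_δ`, the set of words `δ`-connected to `w` is finite of cardinality at most
`2 η⁻¹ b_*⁻²`, where `η = v - u` and `b_* = min_i b i`. -/
theorem card_delta_connected_le {m : ℕ} (hm : 0 < m) (b dd : Fin m → ℝ)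
    (hb : ∀ i, 0 < b i) (hbs : ∑ i, b i = 1)
    (hd : ∀ i, dd i = ∑ k ∈ Finset.univ.filter (fun k => k < i), b k)
    (I : Finset (Fin m)) (hIne : I.Nonempty) (hIproper : I ≠ Finset.univ)
    (F : Set ℝ) (hFne : F.Nonempty) (hFc : IsCompact F) (hF01 : F ⊆ Set.Icc 0 1)
    (hFattr : F = ⋃ i ∈ I, (fun y => b i * y + dd i) '' F)
    (u v : ℝ) (huv : u < v) (hsub : Set.Ioo u v ⊆ Set.Icc 0 1)
    (hgapF : Set.Ioo u v ∩ F = ∅)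
    (δ : ℝ) (hδ : 0 < δ) (w : List (Fin m)) (hw : w ∈ IdxDelta b I δ) :
    {w' | DeltaConn b dd I F δ w w'}.Finite ∧
    ({w' | DeltaConn b dd I F δ w w'}.ncard : ℝ) ≤
      2 / ((v - u) * (⨅ i, b i) ^ 2) := by
  classical
  haveI : Nonempty (Fin m) := ⟨⟨0, hm⟩⟩
  set S := {w' | DeltaConn b dd I F δ w w'} with hSdef
  set bst := ⨅ i, b i with hbstdef
  -- basic facts about bst
  obtain ⟨imin, himin⟩ := Finite.exists_min b
  have hbst_eq : bst = b imin :=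
    le_antisymm (ciInf_le (Set.finite_range b).bddBelow imin) (le_ciInf himin)
  have hbst_pos : 0 < bst := hbst_eq ▸ hb imin
  have hbst_le : ∀ i, bst ≤ b i := fun i => hbst_eq ▸ himin i
  have hbst_le1 : bst ≤ 1 := (hbst_le imin).trans (b_le_one b hb hbs imin)
  -- m ≥ 2 facts
  obtain ⟨i1, hi1⟩ := hIne
  obtain ⟨j1, hj1⟩ : ∃ j, j ∉ I := by
    by_contra h
    push_neg at h
    exact hIproper (Finset.eq_univ_iff_forall.2 h)
  have hij1 : i1 ≠ j1 := fun h => hj1 (h ▸ hi1)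
  have hble : ∀ i, b i + bst ≤ 1 := by
    intro i
    obtain ⟨j, hji⟩ : ∃ j, j ≠ i := by
      rcases eq_or_ne i i1 with rfl | h
      · exact ⟨j1, fun h => hij1 h.symm⟩
      · exact ⟨i1, Ne.symm h⟩
    have hpair : b i + b j = ∑ k ∈ ({i, j} : Finset (Fin m)), b k :=
      (Finset.sum_pair (fun h => hji h.symm)).symm
    have hle : ∑ k ∈ ({i, j} : Finset (Fin m)), b k ≤ ∑ k, b k :=
      Finset.sum_le_sum_of_subset_of_nonneg (Finset.subset_univ _)
        (fun k _ _ => (hb k).le)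
    have := hbst_le j
    linarith [hbs ▸ hle, hpair]
  -- finiteness
  have hSsub : S ⊆ IdxDelta b I δ := by
    rintro w' ⟨k, g, h0, hk, hmem, -⟩
    exact hk ▸ hmem k le_rfl
  have hprodpow : ∀ w' : List (Fin m), (w'.map b).prod ≤ (1 - bst) ^ w'.length := by
    intro w'
    induction w' with
    | nil => simp
    | cons i t ih =>
      simp only [List.map_cons, List.prod_cons, List.length_cons, pow_succ]
      have h1 : b i ≤ 1 - bst := by linarith [hble i]
      have h00 : (0:ℝ) ≤ 1 - bst := by linarith [hble i, hb i]
      have h2 : (0:ℝ) ≤ (1 - bst) ^ t.length := pow_nonneg h00 _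
      calc b i * (t.map b).prod ≤ (1 - bst) * (1 - bst) ^ t.length := by
            apply mul_le_mul h1 ih (prod_pos b hb t).le (by linarith)
        _ = (1 - bst) ^ t.length * (1 - bst) := by ring
  obtain ⟨N, hN⟩ := exists_pow_lt_of_lt_one hδ (by linarith [hble imin, hbst_eq ▸ le_refl (b imin)] : 1 - bst < 1)
  have hIdxfin : (IdxDelta b I δ).Finite := by
    apply (List.finite_length_le (Fin m) (N + 1)).subset
    intro w' hw'
    simp only [Set.mem_setOf_eq]
    by_contra hlen
    push_neg at hlen
    have h1 : δ < ((w'.dropLast).map b).prod := hw'.2.2.2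
    have h2 : ((w'.dropLast).map b).prod ≤ (1 - bst) ^ (w'.dropLast).length := hprodpow _
    have h3 : N ≤ (w'.dropLast).length := by
      rw [List.length_dropLast]; omega
    have h4 : (1 - bst) ^ (w'.dropLast).length ≤ (1 - bst) ^ N :=
      pow_le_pow_of_le_one (by linarith [hble imin]) (by linarith) h3
    linarith
  have hSfin := hIdxfin.subset hSsub
  refine ⟨hSfin, ?_⟩
  -- 0 ≤ u, v ≤ 1
  have hu0 : 0 ≤ u := by
    by_contra h
    push_neg at h
    rcases lt_or_ge 0 v with h2 | h2
    · have := (hsub (show u/2 ∈ Set.Ioo u v from ⟨by linarith, by linarith⟩)).1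
      linarith
    · have := (hsub (show (u+v)/2 ∈ Set.Ioo u v from ⟨by linarith, by linarith⟩)).1
      linarith
  have hv1 : v ≤ 1 := by
    by_contra h
    push_neg at h
    rcases lt_or_ge u 1 with h2 | h2
    · have := (hsub (show (1+v)/2 ∈ Set.Ioo u v from ⟨by linarith, by linarith⟩)).2
      linarith
    · have := (hsub (show (u+v)/2 ∈ Set.Ioo u v from ⟨by linarith, by linarith⟩)).2
      linarith
  have hη : 0 < v - u := by linarith
  -- nonemptiness of images
  have hAne : ∀ w' : List (Fin m), (phiWord b dd w' '' F).Nonempty := fun w' => hFne.image _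
  -- w ∈ S
  have hwS : w ∈ S := ⟨0, fun _ => w, rfl, rfl,
    fun l hl => by simpa using hw, fun l hl => absurd hl (Nat.not_lt_zero l)⟩
  -- generic: images lie in F
  have hAF : ∀ w' ∈ IdxDelta b I δ, phiWord b dd w' '' F ⊆ F := by
    rintro w' hw' x ⟨a, ha, rfl⟩
    exact phiWord_mem_F b dd I F hFattr w' hw'.2.1 ha
  -- generic: diameter control
  have hAdiam : ∀ w' ∈ IdxDelta b I δ, ∀ x ∈ phiWord b dd w' '' F,
      phiWord b dd w' 0 ≤ x ∧ x ≤ phiWord b dd w' 0 + (w'.map b).prod := by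
    rintro w' hw' x ⟨a, ha, rfl⟩
    have ha01 := hF01 ha
    rw [phiWord_eq b dd w' a]
    constructor
    · nlinarith [prod_pos b hb w', ha01.1]
    · nlinarith [prod_pos b hb w', ha01.2]
  -- the key separation principle
  have main2 : ∀ (l r : ℝ), δ < r - l → (∀ x ∈ F, x ∉ Set.Ioo l r) →
      ∀ w1 ∈ S, ∀ w2 ∈ S, (∀ x ∈ phiWord b dd w1 '' F, x ≤ l) →
      (∀ x ∈ phiWord b dd w2 '' F, r ≤ x) → False := by
    intro l r hlr hgap w1 hw1S w2 hw2S hside1 hside2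
    have dich : ∀ w'' ∈ IdxDelta b I δ,
        (∀ x ∈ phiWord b dd w'' '' F, x ≤ l) ∨ (∀ x ∈ phiWord b dd w'' '' F, r ≤ x) := by
      intro w'' hw''
      by_cases hcase : ∀ x ∈ phiWord b dd w'' '' F, x ≤ l
      · exact Or.inl hcase
      · right
        push_neg at hcase
        obtain ⟨x, hxA, hxl⟩ := hcase
        have hxF : x ∈ F := hAF w'' hw'' hxA
        have hxr : r ≤ x := by
          by_contra h
          push_neg at h
          exact hgap x hxF ⟨hxl, h⟩
        intro y hyA
        have hyF : y ∈ F := hAF w'' hw'' hyA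
        have hdx := hAdiam w'' hw'' x hxA
        have hdy := hAdiam w'' hw'' y hyA
        have hP : (w''.map b).prod ≤ δ := hw''.2.2.1
        by_contra h
        push_neg at h
        have hyl : y ≤ l := by
          by_contra h2
          push_neg at h2
          exact hgap y hyF ⟨h2, h⟩
        linarith [hdx.2, hdy.1]
    -- chain preservation
    have chainL : ∀ (k : ℕ) (g : ℕ → List (Fin m)),
        (∀ l' ≤ k, g l' ∈ IdxDelta b I δ) →
        (∀ l' < k, setDist (phiWord b dd (g l') '' F) (phiWord b dd (g (l'+1)) '' F) ≤ δ) →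
        (∀ x ∈ phiWord b dd (g 0) '' F, x ≤ l) →
        ∀ x ∈ phiWord b dd (g k) '' F, x ≤ l := by
      intro k
      induction k with
      | zero => exact fun g _ _ h => h
      | succ n ihn =>
        intro g hmem hdist h0
        have hn := ihn g (fun l' hl' => hmem l' (hl'.trans (Nat.le_succ n)))
          (fun l' hl' => hdist l' (hl'.trans (Nat.lt_succ_self n))) h0
        rcases dich (g (n+1)) (hmem _ le_rfl) with hL | hR
        · exact hL
        · exfalso
          have := setDist_ge (hAne (g n)) (hAne (g (n+1))) hn hR
          have h2 := hdist n (Nat.lt_succ_self n)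
          linarith
    have chainR : ∀ (k : ℕ) (g : ℕ → List (Fin m)),
        (∀ l' ≤ k, g l' ∈ IdxDelta b I δ) →
        (∀ l' < k, setDist (phiWord b dd (g l') '' F) (phiWord b dd (g (l'+1)) '' F) ≤ δ) →
        (∀ x ∈ phiWord b dd (g 0) '' F, r ≤ x) →
        ∀ x ∈ phiWord b dd (g k) '' F, r ≤ x := by
      intro k
      induction k with
      | zero => exact fun g _ _ h => h
      | succ n ihn =>
        intro g hmem hdist h0
        have hn := ihn g (fun l' hl' => hmem l' (hl'.trans (Nat.le_succ n)))
          (fun l' hl' => hdist l' (hl'.trans (Nat.lt_succ_self n))) h0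
        rcases dich (g (n+1)) (hmem _ le_rfl) with hL | hR
        · exfalso
          have := setDist_ge (hAne (g (n+1))) (hAne (g n)) hL hn
          have h2 := hdist n (Nat.lt_succ_self n)
          rw [setDist_comm] at this
          linarith
        · exact hR
    rcases dich w (hSsub hwS) with hwL | hwR
    · obtain ⟨k, g, h0, hk, hmem, hdist⟩ := hw2S
      have := chainL k g hmem hdist (h0 ▸ hwL)
      rw [hk] at this
      obtain ⟨x, hx⟩ := hAne w2
      have h1 := this x hx
      have h2 := hside2 x hx
      linarith
    · obtain ⟨k, g, h0, hk, hmem, hdist⟩ := hw1S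
      have := chainR k g hmem hdist (h0 ▸ hwR)
      rw [hk] at this
      obtain ⟨x, hx⟩ := hAne w1
      have h1 := this x hx
      have h2 := hside1 x hx
      linarith
  -- counting helper, applied to a subfamily of S with all cylinders in [L, R]
  have hcount : ∀ (T : Set (List (Fin m))), T ⊆ S → ∀ L R : ℝ, L ≤ R →
      (∀ w' ∈ T, L ≤ phiWord b dd w' 0 ∧ phiWord b dd w' 1 ≤ R) →
      (T.ncard : ℝ) * (bst * δ) ≤ R - L := by
    intro T hTS L R hLR hTsub
    have hTfin : T.Finite := hSfin.subset hTS
    rw [Set.ncard_eq_toFinset_card _ hTfin]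
    apply count_lemma hTfin.toFinset (fun w' => phiWord b dd w' 0)
      (fun w' => phiWord b dd w' 1) (bst * δ) L R (by positivity) hLR
    · intro a ha
      rw [Set.Finite.mem_toFinset] at ha
      have haI := hSsub (hTS ha)
      have := stop_prod_gt b I hb hδ hbst_pos hbst_le (idx_stop b I hb hbs haI)
      rw [phiWord_eq b dd a 1]
      simp only [mul_one]
      linarith
    · intro a ha
      rw [Set.Finite.mem_toFinset] at ha
      exact hTsub a ha
    · intro a ha a' ha' hne
      rw [Set.Finite.mem_toFinset] at ha ha'
      have h1 := idx_stop b I hb hbs (hSsub (hTS ha))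
      have h2 := idx_stop b I hb hbs (hSsub (hTS ha'))
      exact word_sep b dd hb hbs hd a a'
        (stop_not_prefix b I h1 h2 hne) (stop_not_prefix b I h2 h1 (Ne.symm hne))
  rcases le_or_gt ((v - u) * bst) δ with hbig | hsmall
  · -- easy branch: bound all of S inside [0,1]
    have h01 : ∀ w' ∈ S, (0:ℝ) ≤ phiWord b dd w' 0 ∧ phiWord b dd w' 1 ≤ 1 := by
      intro w' _
      exact ⟨(phiWord_mem_Icc b dd hb hbs hd w' (by norm_num)).1,
        (phiWord_mem_Icc b dd hb hbs hd w' (by norm_num)).2⟩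
    have hc := hcount S (subset_refl S) 0 1 (by norm_num) h01
    rw [le_div_iff₀ (by positivity : (0:ℝ) < (v - u) * bst ^ 2)]
    have e1 : ((S.ncard : ℝ) * bst) * ((v - u) * bst) ≤ ((S.ncard : ℝ) * bst) * δ :=
      mul_le_mul_of_nonneg_left hbig (by positivity)
    nlinarith [e1, hc]
  · -- main branch
    set δ' := δ / ((v - u) * bst) with hδ'def
    have hbd : 0 < (v - u) * bst := by positivity
    have hδ'pos : 0 < δ' := div_pos hδ hbd
    have hδ'lt1 : δ' < 1 := (div_lt_one hbd).2 hsmall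
    have hδδ' : δ = δ' * ((v - u) * bst) := by rw [hδ'def, div_mul_cancel₀ δ hbd.ne']
    have hδle : δ ≤ δ' := by
      rw [hδ'def, le_div_iff₀ hbd]
      have hvu1 : (v - u) * bst ≤ 1 := by nlinarith [hbst_pos, hbst_le1, hu0, hv1]
      nlinarith [mul_le_mul_of_nonneg_left hvu1 hδ.le]
    -- the δ'-prefix of each word of 𝓘_δ
    have hpref : ∀ w' : List (Fin m), ∃ W : List (Fin m), w' ∈ IdxDelta b I δ →
        (W <+: w') ∧ Stop b I δ' W := by
      intro w'
      by_cases hw' : w' ∈ IdxDelta b I δ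
      · obtain ⟨hne, hmem, hle, hgt⟩ := hw'
        have hex : ∃ k, ((w'.take k).map b).prod ≤ δ' := by
          refine ⟨w'.length, ?_⟩
          rw [List.take_length]
          exact hle.trans hδle
        set n := Nat.find hex with hndef
        have hspec : ((w'.take n).map b).prod ≤ δ' := Nat.find_spec hex
        have hn0 : 0 < n := by
          rcases Nat.eq_zero_or_pos n with h0 | h0
          · exfalso
            rw [h0] at hspec
            simp at hspec
            linarith
          · exact h0
        have hnlen : n ≤ w'.length := Nat.find_min' hex (by
          rw [List.take_length]; exact hle.trans hδle)
        refine ⟨w'.take n, fun _ => ⟨List.take_prefix n w', ?_, ?_, hspec, ?_⟩⟩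
        · intro hnil
          have hh := congrArg List.length hnil
          rw [List.length_take] at hh
          simp only [List.length_nil] at hh
          omega
        · exact fun i hi => hmem i ((List.take_prefix n w').subset hi)
        · intro k hk
          rw [List.length_take] at hk
          have hk' : k < n := lt_of_lt_of_le hk (min_le_left _ _)
          have h2 := Nat.find_min hex hk'
          push_neg at h2
          have h3 : (w'.take n).take k = w'.take k := by
            rw [List.take_take]
            congr 1
            omega
          rw [h3]
          exact h2
      · exact ⟨[], fun h => absurd h hw'⟩
    choose Wf hWf using hpref
    -- extremal prefixes
    have hPfin : (Wf '' S).Finite := hSfin.image _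
    have hPne : (Wf '' S).Nonempty := ⟨Wf w, Set.mem_image_of_mem _ hwS⟩
    obtain ⟨Wa, hWaP, hWamin⟩ :=
      Set.exists_min_image (Wf '' S) (fun W => phiWord b dd W 0) hPfin hPne
    obtain ⟨Wb, hWbP, hWbmax⟩ :=
      Set.exists_max_image (Wf '' S) (fun W => phiWord b dd W 0) hPfin hPne
    obtain ⟨wa, hwaS, hwaW⟩ := hWaP
    obtain ⟨wb, hwbS, hwbW⟩ := hWbP
    have hStWa : Stop b I δ' Wa := hwaW ▸ (hWf wa (hSsub hwaS)).2
    have hStWb : Stop b I δ' Wb := hwbW ▸ (hWf wb (hSsub hwbS)).2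
    -- at most two δ'-prefixes occur in S
    have hclaim : ∀ w' ∈ S, Wf w' = Wa ∨ Wf w' = Wb := by
      intro w' hw'S
      by_contra hcon
      push_neg at hcon
      obtain ⟨hna, hnb⟩ := hcon
      set Wc := Wf w' with hWcdef
      have hWcP : Wc ∈ Wf '' S := Set.mem_image_of_mem _ hw'S
      have hStWc : Stop b I δ' Wc := (hWf w' (hSsub hw'S)).2
      have hDa : phiWord b dd Wa 0 ≤ phiWord b dd Wc 0 := hWamin _ hWcP
      have hDb : phiWord b dd Wc 0 ≤ phiWord b dd Wb 0 := hWbmax _ hWcP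
      have hPWc := stop_prod_gt b I hb hδ'pos hbst_pos hbst_le hStWc
      have hPWa_pos := prod_pos b hb Wa
      have hPWb_pos := prod_pos b hb Wb
      have hPWc_pos := prod_pos b hb Wc
      have hsepac : phiWord b dd Wa 1 ≤ phiWord b dd Wc 0 := by
        have hne : Wa ≠ Wc := fun h => hna h.symm
        rcases word_sep b dd hb hbs hd Wa Wc
          (stop_not_prefix b I hStWa hStWc hne)
          (stop_not_prefix b I hStWc hStWa hne.symm) with h | h
        · exact h
        · exfalso
          rw [phiWord_eq b dd Wc 1] at h
          nlinarith [hPWc_pos]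
      have hsepcb : phiWord b dd Wc 1 ≤ phiWord b dd Wb 0 := by
        have hne : Wc ≠ Wb := hnb
        rcases word_sep b dd hb hbs hd Wc Wb
          (stop_not_prefix b I hStWc hStWb hne)
          (stop_not_prefix b I hStWb hStWc hne.symm) with h | h
        · exact h
        · exfalso
          rw [phiWord_eq b dd Wb 1] at h
          nlinarith [hPWb_pos]
      set gl := phiWord b dd Wc u with hgl
      set gr := phiWord b dd Wc v with hgr
      have hglr : δ < gr - gl := by
        rw [hgl, hgr, phiWord_eq b dd Wc u, phiWord_eq b dd Wc v]
        nlinarith [mul_lt_mul_of_pos_right hPWc hη, hδδ']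
      have hgap : ∀ x ∈ F, x ∉ Set.Ioo gl gr :=
        gap_lemma b dd hb hbs hd I F hF01 hFattr u v hu0 hv1 huv hgapF Wc hStWc.2.1
      have hsidea : ∀ x ∈ phiWord b dd wa '' F, x ≤ gl := by
        rintro x ⟨a, ha, rfl⟩
        have h1 : phiWord b dd wa a ≤ phiWord b dd wa 1 :=
          phiWord_mono b dd hb wa (hF01 ha).2
        obtain ⟨ra, hra⟩ := (hWf wa (hSsub hwaS)).1
        rw [hwaW] at hra
        have h2 : phiWord b dd wa 1 ≤ phiWord b dd Wa 1 := by
          rw [← hra]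
          exact (ext_bounds b dd hb hbs hd Wa ra).2
        have h3 : phiWord b dd Wc 0 ≤ gl := by
          rw [hgl, phiWord_eq b dd Wc u]
          nlinarith [hPWc_pos, hu0]
        linarith [hsepac]
      have hsideb : ∀ x ∈ phiWord b dd wb '' F, gr ≤ x := by
        rintro x ⟨a, ha, rfl⟩
        have h1 : phiWord b dd wb 0 ≤ phiWord b dd wb a :=
          phiWord_mono b dd hb wb (hF01 ha).1
        obtain ⟨rb, hrb⟩ := (hWf wb (hSsub hwbS)).1
        rw [hwbW] at hrb
        have h2 : phiWord b dd Wb 0 ≤ phiWord b dd wb 0 := by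
          rw [← hrb]
          exact (ext_bounds b dd hb hbs hd Wb rb).1
        have h3 : gr ≤ phiWord b dd Wc 1 := by
          rw [hgr, phiWord_eq b dd Wc v, phiWord_eq b dd Wc 1]
          nlinarith [hPWc_pos, hv1]
        linarith [hsepcb]
      exact main2 gl gr hglr hgap wa hwaS wb hwbS hsidea hsideb
    -- counting within each prefix class
    have hbound : ∀ W0, Stop b I δ' W0 →
        ({w' ∈ S | Wf w' = W0}.ncard : ℝ) * (bst * δ) ≤ δ' := by
      intro W0 hSt
      have hsub0 : ∀ w' ∈ {w' ∈ S | Wf w' = W0},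
          phiWord b dd W0 0 ≤ phiWord b dd w' 0 ∧ phiWord b dd w' 1 ≤ phiWord b dd W0 1 := by
        rintro w' ⟨hw'S, hw'W⟩
        obtain ⟨r0, hr0⟩ := (hWf w' (hSsub hw'S)).1
        rw [hw'W] at hr0
        rw [← hr0]
        exact ⟨(ext_bounds b dd hb hbs hd W0 r0).1, (ext_bounds b dd hb hbs hd W0 r0).2⟩
      have hLR : phiWord b dd W0 0 ≤ phiWord b dd W0 1 :=
        phiWord_mono b dd hb W0 (by norm_num)
      have hc := hcount {w' ∈ S | Wf w' = W0} (fun x hx => hx.1) _ _ hLR hsub0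
      have hP0 : phiWord b dd W0 1 - phiWord b dd W0 0 = (W0.map b).prod := by
        rw [phiWord_eq b dd W0 1]
        ring
      calc ({w' ∈ S | Wf w' = W0}.ncard : ℝ) * (bst * δ)
          ≤ phiWord b dd W0 1 - phiWord b dd W0 0 := hc
        _ = (W0.map b).prod := hP0
        _ ≤ δ' := hSt.2.2.1
    have hSun : S ⊆ {w' ∈ S | Wf w' = Wa} ∪ {w' ∈ S | Wf w' = Wb} := by
      intro w' hw'
      rcases hclaim w' hw' with h | h
      · exact Or.inl ⟨hw', h⟩
      · exact Or.inr ⟨hw', h⟩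
    have hcard : (S.ncard : ℝ) ≤
        ({w' ∈ S | Wf w' = Wa}.ncard : ℝ) + ({w' ∈ S | Wf w' = Wb}.ncard : ℝ) := by
      have h1 := Set.ncard_le_ncard hSun
        ((hSfin.subset (fun x hx => hx.1)).union (hSfin.subset (fun x hx => hx.1)))
      have h2 := Set.ncard_union_le {w' ∈ S | Wf w' = Wa} {w' ∈ S | Wf w' = Wb}
      exact_mod_cast le_trans h1 h2
    have ha := hbound Wa hStWa
    have hbb := hbound Wb hStWb
    rw [le_div_iff₀ (by positivity : (0:ℝ) < (v - u) * bst ^ 2)]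
    have e0 : (S.ncard : ℝ) * (bst * δ) ≤ 2 * δ' := by
      have e0' := mul_le_mul_of_nonneg_right hcard (show (0:ℝ) ≤ bst * δ by positivity)
      nlinarith [ha, hbb]
    rw [hδδ'] at e0
    have e2 : (S.ncard : ℝ) * ((v - u) * bst ^ 2) * δ' ≤ 2 * δ' := by
      linear_combination e0
    exact le_of_mul_le_mul_right e2 hδ'pos
end

section
/- Let E be a Lalley–Gatzouras self-affine set with defining maps S_{ij}(x,y) = (a_{ij}x + c_{ij}, b_i y + d_i). If n_i ≠ 0 for every i ∈ {1,…,m} (i.e., every row contains at least one map), then E is not uniformly disconnected. -/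
/-- The data of a Lalley–Gatzouras system: `m ≥ 2` rows of heights `b i` summing to `1`;
in row `i` there are `n i` maps with horizontal ratios `a i j ∈ (0, b i)` and horizontal
translations `c i j`, the corresponding rectangles lying in `[0,1]²`, disjoint, in rows. -/
structure LGSystem where
  m : ℕ
  hm : 2 ≤ m
  n : Fin m → ℕ
  b : Fin m → ℝ
  a : (i : Fin m) → Fin (n i) → ℝ
  c : (i : Fin m) → Fin (n i) → ℝ
  b_pos : ∀ i, 0 < b i
  b_sum : ∑ i, b i = 1
  a_pos : ∀ i j, 0 < a i j
  a_lt_b : ∀ i j, a i j < b i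
  a_sum : ∀ i, ∑ j, a i j ≤ 1
  c_nonneg : ∀ i j, 0 ≤ c i j
  c_sep : ∀ i (j k : Fin (n i)), (k : ℕ) = (j : ℕ) + 1 → a i j ≤ c i k - c i j
  c_last : ∀ i (j : Fin (n i)), (j : ℕ) + 1 = n i → a i j ≤ 1 - c i j

namespace LGSystem

variable (Λ : LGSystem)

/-- `d i = b 1 + ⋯ + b (i-1)`: the bottom height of row `i`. -/
def d (i : Fin Λ.m) : ℝ := ∑ k ∈ Finset.univ.filter (fun k => k < i), Λ.b k

/-- The affine map `S i j (x, y) = (a i j * x + c i j, b i * y + d i)`. -/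
def S (i : Fin Λ.m) (j : Fin (Λ.n i)) (p : ℝ × ℝ) : ℝ × ℝ :=
  (Λ.a i j * p.1 + Λ.c i j, Λ.b i * p.2 + Λ.d i)

/-- `E` is the attractor of the system: the (unique) nonempty compact set with
`E = ⋃_{(i,j)} S i j (E)`. -/
def IsAttractor (E : Set (ℝ × ℝ)) : Prop :=
  E.Nonempty ∧ IsCompact E ∧ E = ⋃ (i : Fin Λ.m), ⋃ (j : Fin (Λ.n i)), Λ.S i j '' E

end LGSystem

/- ------------------  auxiliary lemmas ------------------ -/

lemma LG_exists_interval_step (g : ℕ → ℝ) (m : ℕ) (hm : 0 < m)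
    {y : ℝ} (h0 : 0 ≤ y) (h1 : y ≤ ∑ k ∈ Finset.range m, g k) :
    ∃ i < m, (∑ k ∈ Finset.range i, g k) ≤ y ∧ y ≤ ∑ k ∈ Finset.range (i+1), g k := by
  classical
  set s := (Finset.range m).filter (fun i => ∑ k ∈ Finset.range i, g k ≤ y) with hs
  have h0s : (0:ℕ) ∈ s := by
    simp [hs, hm, h0]
  have hne : s.Nonempty := ⟨0, h0s⟩
  set i := s.max' hne with hi
  have his : i ∈ s := s.max'_mem hne
  have him : i < m := (Finset.mem_filter.mp his).1 |> Finset.mem_range.mp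
  refine ⟨i, him, (Finset.mem_filter.mp his).2, ?_⟩
  by_contra hlt
  push_neg at hlt
  rcases eq_or_lt_of_le (Nat.succ_le_of_lt him) with h | h
  · have h' : i + 1 = m := h
    rw [h'] at hlt; exact absurd h1 (not_le.mpr hlt)
  · have : i + 1 ∈ s := Finset.mem_filter.mpr ⟨Finset.mem_range.mpr h, le_of_lt hlt⟩
    have := Finset.le_max' s _ this
    omega

/-- The extension of `Λ.b` to `ℕ`. -/
noncomputable def LGg (Λ : LGSystem) : ℕ → ℝ :=
  fun k => if h : k < Λ.m then Λ.b ⟨k, h⟩ else 0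

lemma LGg_sum (Λ : LGSystem) : ∑ k ∈ Finset.range Λ.m, LGg Λ k = 1 := by
  rw [← Λ.b_sum, ← Fin.sum_univ_eq_sum_range]
  exact Finset.sum_congr rfl (fun k _ => by simp [LGg, k.isLt])

lemma LGd_eq (Λ : LGSystem) (i : Fin Λ.m) :
    Λ.d i = ∑ k ∈ Finset.range i.val, LGg Λ k := by
  classical
  rw [LGSystem.d, Finset.sum_filter]
  have h1 : ∑ k : Fin Λ.m, (if k < i then Λ.b k else 0)
      = ∑ k ∈ Finset.range Λ.m, (if k < i.val then LGg Λ k else 0) := by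
    rw [← Fin.sum_univ_eq_sum_range]
    refine Finset.sum_congr rfl (fun k _ => ?_)
    by_cases h : (k:ℕ) < i.val
    · rw [if_pos (Fin.lt_def.mpr h), if_pos h]; simp [LGg, k.isLt]
    · rw [if_neg (fun hc => h (Fin.lt_def.mp hc)), if_neg h]
  rw [h1]
  rw [← Finset.sum_subset (Finset.range_subset_range.mpr i.isLt.le)
    (fun k _ hk => if_neg (by simp at hk ⊢; omega))]
  exact Finset.sum_congr rfl (fun k hk => if_pos (Finset.mem_range.mp hk))

/-- Row-finding: each `y ∈ [0,1]` lies in some row interval `[d i, d i + b i]`. -/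
lemma LG_exists_row (Λ : LGSystem) {y : ℝ} (h0 : 0 ≤ y) (h1 : y ≤ 1) :
    ∃ i : Fin Λ.m, Λ.d i ≤ y ∧ y ≤ Λ.d i + Λ.b i := by
  have hm : 0 < Λ.m := by have := Λ.hm; omega
  obtain ⟨i, him, hlo, hhi⟩ := LG_exists_interval_step (LGg Λ) Λ.m hm h0
    (by rw [LGg_sum]; exact h1)
  refine ⟨⟨i, him⟩, ?_, ?_⟩
  · rw [LGd_eq]; exact hlo
  · rw [LGd_eq]
    have : LGg Λ i = Λ.b ⟨i, him⟩ := by simp [LGg, him]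
    calc y ≤ ∑ k ∈ Finset.range (i+1), LGg Λ k := hhi
      _ = (∑ k ∈ Finset.range i, LGg Λ k) + Λ.b ⟨i, him⟩ := by
          rw [Finset.sum_range_succ, this]

lemma LG_S_mem (Λ : LGSystem) {E : Set (ℝ × ℝ)} (hE : Λ.IsAttractor E)
    (i : Fin Λ.m) (j : Fin (Λ.n i)) {p : ℝ × ℝ} (hp : p ∈ E) : Λ.S i j p ∈ E := by
  have h := hE.2.2
  rw [h]
  exact Set.mem_iUnion.mpr ⟨i, Set.mem_iUnion.mpr ⟨j, ⟨p, hp, rfl⟩⟩⟩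

lemma LG_b_lt_one (Λ : LGSystem) (i : Fin Λ.m) : Λ.b i < 1 := by
  classical
  have hm := Λ.hm
  -- an index different from i
  have : ∃ i' : Fin Λ.m, i' ≠ i := by
    by_cases h : (i : ℕ) = 0
    · exact ⟨⟨1, by omega⟩, by intro hc; rw [← hc] at h; simp at h⟩
    · exact ⟨⟨0, by omega⟩, by intro hc; rw [← hc] at h; simp at h⟩
  obtain ⟨i', hi'⟩ := this
  have := Finset.single_lt_sum hi' (Finset.mem_univ i) (Finset.mem_univ i')
    (Λ.b_pos i') (fun k _ _ => (Λ.b_pos k).le)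
  rwa [Λ.b_sum] at this

/-- Heights of points of the attractor are dense in `[0,1]`. -/
lemma LG_height_density (Λ : LGSystem) {E : Set (ℝ × ℝ)} (hE : Λ.IsAttractor E)
    (hn : ∀ i, Λ.n i ≠ 0) {ε : ℝ} (hε : 0 < ε) {y : ℝ} (hy : y ∈ Set.Icc (0:ℝ) 1) :
    ∃ p ∈ E, |p.2 - y| ≤ ε := by
  classical
  obtain ⟨p₀, hp₀⟩ := hE.1
  have hmpos : 0 < Λ.m := by have := Λ.hm; omega
  haveI : Nonempty (Fin Λ.m) := ⟨⟨0, hmpos⟩⟩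
  set B : ℝ := Finset.univ.sup' Finset.univ_nonempty Λ.b with hB
  have hBpos : 0 < B := lt_of_lt_of_le (Λ.b_pos ⟨0, hmpos⟩)
    (Finset.le_sup' _ (Finset.mem_univ _))
  have hBlt : B < 1 := by
    obtain ⟨i, _, hiB⟩ := Finset.exists_mem_eq_sup' Finset.univ_nonempty Λ.b
    rw [hB, hiB]; exact LG_b_lt_one Λ i
  have hBb : ∀ i, Λ.b i ≤ B := fun i => Finset.le_sup' _ (Finset.mem_univ i)
  set M : ℝ := |p₀.2| + 1 with hM
  have hMpos : 0 < M := by positivity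
  have claim : ∀ k : ℕ, ∀ y ∈ Set.Icc (0:ℝ) 1, ∃ p ∈ E, |p.2 - y| ≤ B^k * M := by
    intro k
    induction k with
    | zero =>
      intro y hy
      refine ⟨p₀, hp₀, ?_⟩
      rw [pow_zero, one_mul, hM]
      have : |p₀.2 - y| ≤ |p₀.2| + |y| := abs_sub _ _
      have hy1 : |y| ≤ 1 := abs_le.mpr ⟨by linarith [hy.1], hy.2⟩
      linarith
    | succ k ih =>
      intro y hy
      obtain ⟨i, hlo, hhi⟩ := LG_exists_row Λ hy.1 hy.2
      have hbi := Λ.b_pos i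
      set y' : ℝ := (y - Λ.d i) / Λ.b i with hy'
      have hy'mem : y' ∈ Set.Icc (0:ℝ) 1 := by
        constructor
        · exact div_nonneg (by linarith) hbi.le
        · rw [div_le_one hbi]; linarith
      obtain ⟨p, hpE, hpd⟩ := ih y' hy'mem
      have hnpos : 0 < Λ.n i := Nat.pos_of_ne_zero (hn i)
      refine ⟨Λ.S i ⟨0, hnpos⟩ p, LG_S_mem Λ hE _ _ hpE, ?_⟩
      have hyeq : y = Λ.b i * y' + Λ.d i := by
        rw [hy']; field_simp; ring
      have h2 : (Λ.S i ⟨0, hnpos⟩ p).2 = Λ.b i * p.2 + Λ.d i := rfl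
      rw [h2, hyeq]
      have : Λ.b i * p.2 + Λ.d i - (Λ.b i * y' + Λ.d i) = Λ.b i * (p.2 - y') := by ring
      rw [this, abs_mul, abs_of_pos hbi]
      calc Λ.b i * |p.2 - y'| ≤ B * (B^k * M) := by
            apply mul_le_mul (hBb i) hpd (abs_nonneg _) hBpos.le
        _ = B^(k+1) * M := by ring
  -- choose k with B^k * M ≤ ε
  obtain ⟨k, hk⟩ := exists_pow_lt_of_lt_one (show (0:ℝ) < ε / M by positivity) hBlt
  obtain ⟨p, hpE, hpd⟩ := claim k y hy
  exact ⟨p, hpE, hpd.trans (le_of_lt ((lt_div_iff₀ hMpos).mp hk))⟩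

lemma LG_iterate_mem (Λ : LGSystem) {E : Set (ℝ × ℝ)} (hE : Λ.IsAttractor E)
    (i : Fin Λ.m) (j : Fin (Λ.n i)) (k : ℕ) {p : ℝ × ℝ} (hp : p ∈ E) :
    (Λ.S i j)^[k] p ∈ E := by
  induction k with
  | zero => simpa using hp
  | succ k ih => rw [Function.iterate_succ_apply']; exact LG_S_mem Λ hE i j ih

lemma LG_iterate_snd_sub (Λ : LGSystem) (i : Fin Λ.m) (j : Fin (Λ.n i)) (k : ℕ)
    (p q : ℝ × ℝ) :
    ((Λ.S i j)^[k] p).2 - ((Λ.S i j)^[k] q).2 = (Λ.b i)^k * (p.2 - q.2) := by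
  induction k with
  | zero => simp
  | succ k ih =>
    rw [Function.iterate_succ_apply', Function.iterate_succ_apply']
    show (Λ.b i * ((Λ.S i j)^[k] p).2 + Λ.d i) - (Λ.b i * ((Λ.S i j)^[k] q).2 + Λ.d i)
      = (Λ.b i)^(k+1) * (p.2 - q.2)
    have : Λ.b i * ((Λ.S i j)^[k] p).2 + Λ.d i - (Λ.b i * ((Λ.S i j)^[k] q).2 + Λ.d i)
      = Λ.b i * (((Λ.S i j)^[k] p).2 - ((Λ.S i j)^[k] q).2) := by ring
    rw [this, ih]; ring

lemma LG_iterate_fst_sub (Λ : LGSystem) (i : Fin Λ.m) (j : Fin (Λ.n i)) (k : ℕ)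
    (p q : ℝ × ℝ) :
    ((Λ.S i j)^[k] p).1 - ((Λ.S i j)^[k] q).1 = (Λ.a i j)^k * (p.1 - q.1) := by
  induction k with
  | zero => simp
  | succ k ih =>
    rw [Function.iterate_succ_apply', Function.iterate_succ_apply']
    show (Λ.a i j * ((Λ.S i j)^[k] p).1 + Λ.c i j) - (Λ.a i j * ((Λ.S i j)^[k] q).1 + Λ.c i j)
      = (Λ.a i j)^(k+1) * (p.1 - q.1)
    have : Λ.a i j * ((Λ.S i j)^[k] p).1 + Λ.c i j - (Λ.a i j * ((Λ.S i j)^[k] q).1 + Λ.c i j)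
      = Λ.a i j * (((Λ.S i j)^[k] p).1 - ((Λ.S i j)^[k] q).1) := by ring
    rw [this, ih]; ring

/-- necessity: if every row of a Lalley–Gatzouras system contains at least one
map (`n i ≠ 0` for all `i`), then its attractor `E` is not uniformly disconnected. -/
theorem not_unifDisc_of_all_rows_nonempty (Λ : LGSystem) (E : Set (ℝ × ℝ))
    (hE : Λ.IsAttractor E) (hn : ∀ i, Λ.n i ≠ 0) : ¬ UnifDisc E := by
  rintro ⟨C, hC, hud⟩
  have hCpos : (0:ℝ) < C := by linarith
  have hm2 := Λ.hm
  set i0 : Fin Λ.m := ⟨0, by omega⟩ with hi0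
  have hn0 : 0 < Λ.n i0 := Nat.pos_of_ne_zero (hn i0)
  set j0 : Fin (Λ.n i0) := ⟨0, hn0⟩ with hj0
  have ha : 0 < Λ.a i0 j0 := Λ.a_pos i0 j0
  have hb : 0 < Λ.b i0 := Λ.b_pos i0
  have hab : Λ.a i0 j0 < Λ.b i0 := Λ.a_lt_b i0 j0
  -- bound on E
  obtain ⟨W0, hW0⟩ := Metric.isBounded_iff.mp hE.2.1.isBounded
  set W : ℝ := max W0 0 with hWdef
  have hWnn : 0 ≤ W := le_max_right _ _
  have hW : ∀ {x y : ℝ × ℝ}, x ∈ E → y ∈ E → dist x y ≤ W :=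
    fun hx hy => (hW0 hx hy).trans (le_max_left _ _)
  -- choose N
  set N : ℕ := ⌈(8:ℝ)*C⌉₊ with hNdef
  have hN8C : 8*C ≤ (N:ℝ) := Nat.le_ceil _
  have hN8 : (8:ℝ) ≤ (N:ℝ) := by nlinarith
  have hNpos : (0:ℝ) < N := by linarith
  -- choose k
  have hab1 : Λ.a i0 j0 / Λ.b i0 < 1 := (div_lt_one hb).mpr hab
  obtain ⟨k, hk⟩ := exists_pow_lt_of_lt_one
    (show (0:ℝ) < 1/(2*C)/(W+1) by positivity) hab1
  -- points at prescribed heights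
  have hdens : ∀ l : ℕ, ∃ p, p ∈ E ∧ (l ≤ N → |p.2 - (l:ℝ)/N| ≤ 1/N) := by
    intro l
    by_cases hl : l ≤ N
    · obtain ⟨p, hpE, hpd⟩ := LG_height_density Λ hE hn
        (show (0:ℝ) < 1/N by positivity)
        (show (l:ℝ)/N ∈ Set.Icc (0:ℝ) 1 from
          ⟨by positivity, by
            rw [div_le_one hNpos]; exact_mod_cast Nat.cast_le.mpr hl⟩)
      exact ⟨p, hpE, fun _ => hpd⟩
    · exact ⟨hE.1.choose, hE.1.choose_spec, fun h => absurd h hl⟩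
  choose p hpE hpd using hdens
  set T : ℝ × ℝ → ℝ × ℝ := (Λ.S i0 j0)^[k] with hT
  set q : ℕ → ℝ × ℝ := fun l => T (p l) with hq
  have hqE : ∀ l, q l ∈ E := fun l => LG_iterate_mem Λ hE i0 j0 k (hpE l)
  set r : ℝ := (Λ.b i0)^k / 2 with hr
  have hrpos : 0 < r := by positivity
  obtain ⟨A, hAE, hball, hAr, hsep⟩ := hud (q 0) (hqE 0) r hrpos
  -- distance formula
  have hdist : ∀ l l' : ℕ, dist (q l) (q l')
      = max ((Λ.a i0 j0)^k * |(p l).1 - (p l').1|) ((Λ.b i0)^k * |(p l).2 - (p l').2|) := by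
    intro l l'
    rw [Prod.dist_eq, Real.dist_eq, Real.dist_eq]
    congr 1
    · rw [show (q l).1 - (q l').1 = (Λ.a i0 j0)^k * ((p l).1 - (p l').1) from
        LG_iterate_fst_sub Λ i0 j0 k (p l) (p l'), abs_mul,
        abs_of_pos (pow_pos ha k)]
    · rw [show (q l).2 - (q l').2 = (Λ.b i0)^k * ((p l).2 - (p l').2) from
        LG_iterate_snd_sub Λ i0 j0 k (p l) (p l'), abs_mul,
        abs_of_pos (pow_pos hb k)]
  have hrC : r / C = (Λ.b i0)^k / (2*C) := by rw [hr]; ring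
  -- horizontal estimate
  have hhor : ∀ l l' : ℕ, (Λ.a i0 j0)^k * |(p l).1 - (p l').1| < (Λ.b i0)^k / (2*C) := by
    intro l l'
    have h1 : |(p l).1 - (p l').1| ≤ W := by
      have hd := hW (hpE l) (hpE l')
      rw [Prod.dist_eq] at hd
      have h' : dist (p l).1 (p l').1 ≤ W := le_trans (le_max_left _ _) hd
      rwa [Real.dist_eq] at h'
    have hak : (Λ.a i0 j0)^k = (Λ.a i0 j0 / Λ.b i0)^k * (Λ.b i0)^k := by
      rw [← mul_pow, div_mul_cancel₀]; exact hb.ne'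
    calc (Λ.a i0 j0)^k * |(p l).1 - (p l').1|
        ≤ (Λ.a i0 j0)^k * (W + 1) := by
          apply mul_le_mul_of_nonneg_left (by linarith) (pow_pos ha k).le
      _ = (Λ.a i0 j0 / Λ.b i0)^k * (W + 1) * (Λ.b i0)^k := by rw [hak]; ring
      _ < (1/(2*C)/(W+1)) * (W + 1) * (Λ.b i0)^k := by
          apply mul_lt_mul_of_pos_right _ (pow_pos hb k)
          exact mul_lt_mul_of_pos_right hk (by linarith)
      _ = (Λ.b i0)^k / (2*C) := by field_simp
  -- step estimate
  have hstep : ∀ l : ℕ, l < N → dist (q l) (q (l+1)) < r / C := by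
    intro l hl
    rw [hdist, hrC]
    apply max_lt (hhor l (l+1))
    have h1 := hpd l (le_of_lt hl)
    have h2 := hpd (l+1) hl
    have h3 : |(p l).2 - (p (l+1)).2| ≤ 3 / N := by
      have hcast : ((l+1:ℕ):ℝ)/N - (l:ℝ)/N = 1/N := by
        push_cast; ring
      rw [abs_sub_comm ((p (l+1)).2)] at h2
      have t1 : |(p l).2 - (p (l+1)).2| ≤ |(p l).2 - (l:ℝ)/N| + |(l:ℝ)/N - (p (l+1)).2| :=
        abs_sub_le _ _ _
      have t2 : |(l:ℝ)/N - (p (l+1)).2|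
          ≤ |(l:ℝ)/N - ((l+1:ℕ):ℝ)/N| + |((l+1:ℕ):ℝ)/N - (p (l+1)).2| := abs_sub_le _ _ _
      have t3 : |(l:ℝ)/N - ((l+1:ℕ):ℝ)/N| = 1/N := by
        rw [abs_sub_comm, hcast, abs_of_pos (by positivity)]
      have h3N : (3:ℝ)/N = 1/N + 1/N + 1/N := by ring
      rw [h3N]
      linarith
    have h4 : 3 / (N:ℝ) < 1 / (2*C) := by
      rw [div_lt_div_iff₀ hNpos (by linarith)]
      nlinarith
    calc (Λ.b i0)^k * |(p l).2 - (p (l+1)).2|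
        ≤ (Λ.b i0)^k * (3/N) := mul_le_mul_of_nonneg_left h3 (pow_pos hb k).le
      _ < (Λ.b i0)^k * (1/(2*C)) := by
          exact mul_lt_mul_of_pos_left h4 (pow_pos hb k)
      _ = (Λ.b i0)^k / (2*C) := by ring
  -- the chain stays in A
  have hq0A : q 0 ∈ A := hball ⟨Metric.mem_ball_self (by positivity), hqE 0⟩
  have hchain : ∀ l : ℕ, l ≤ N → q l ∈ A := by
    intro l
    induction l with
    | zero => intro _; exact hq0A
    | succ n ih =>
      intro hl
      have hqn := ih (by omega)
      by_contra hqA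
      have hge : r/C ≤ dist (q n) (q (n+1)) := hsep _ hqn _ ⟨hqE _, hqA⟩
      exact absurd hge (not_le.mpr (hstep n (by omega)))
  -- contradiction
  have hQN : q N ∈ Metric.ball (q 0) r := hAr (hchain N le_rfl)
  have hlt : dist (q N) (q 0) < r := Metric.mem_ball.mp hQN
  have hgap : |(p N).2 - (p 0).2| ≥ 1 - 2/N := by
    have h1 := hpd N le_rfl
    have h2 := hpd 0 (Nat.zero_le _)
    have hNN : ((N:ℕ):ℝ)/N = 1 := div_self hNpos.ne'
    have h0N : ((0:ℕ):ℝ)/N = 0 := by simp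
    rw [hNN] at h1
    rw [h0N, sub_zero] at h2
    have ha1 := abs_le.mp h1
    have ha2 := abs_le.mp h2
    rw [ge_iff_le, le_abs]
    left
    have : (1:ℝ)/N + 1/N = 2/N := by ring
    linarith [ha1.1, ha2.2]
  have hdN : dist (q N) (q 0) ≥ (Λ.b i0)^k * (1 - 2/N) := by
    rw [hdist]
    refine le_trans ?_ (le_max_right _ _)
    exact mul_le_mul_of_nonneg_left hgap (pow_pos hb k).le
  have h2N : (2:ℝ)/N ≤ 1/4 := by
    rw [div_le_div_iff₀ hNpos (by norm_num)]
    linarith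
  have hbk : 0 < (Λ.b i0)^k := pow_pos hb k
  have hge : (Λ.b i0)^k * (3/4) ≤ dist (q N) (q 0) := by
    refine le_trans ?_ hdN
    apply mul_le_mul_of_nonneg_left (by linarith) hbk.le
  rw [hr] at hlt
  linarith
end

section
/- In the sufficiency proof setup for Lalley–Gatzouras sets: let F = ⋃_{i∈𝓘} φ_i(F) be the projection self-similar set with a gap (some open interval I ⊆ [0,1] disjoint from F), and for δ > 0 and w ∈ 𝓘_δ let B = ⋃_{v ∈ 𝓘_δ(w)} φ_v(F), where 𝓘_δ(w) is the δ-connected component of w in 𝓘_δ. Then for any y₀ ∈ φ_w(F): (y₀−δ, y₀+δ) ∩ F ⊆ B, dist(B, F∖B) > δ, and |B| ≤ 2Lδ where L = sup_{δ,w} #𝓘_δ(w) < ∞. -/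
section Aux
variable {m : ℕ} {b dd : Fin m → ℝ}

lemma phiWord_append (u v : List (Fin m)) (y : ℝ) :
    phiWord b dd (u ++ v) y = phiWord b dd u (phiWord b dd v y) := by
  induction u with
  | nil => rfl
  | cons i u ih => simp [phiWord, ih]

lemma phiWord_sub (v : List (Fin m)) (y z : ℝ) :
    phiWord b dd v y - phiWord b dd v z = (v.map b).prod * (y - z) := by
  induction v with
  | nil => simp [phiWord]
  | cons i v ih =>
    calc b i * phiWord b dd v y + dd i - (b i * phiWord b dd v z + dd i)
        = b i * (phiWord b dd v y - phiWord b dd v z) := by ring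
      _ = b i * ((v.map b).prod * (y - z)) := by rw [ih]
      _ = ((i::v).map b).prod * (y - z) := by simp [List.prod_cons]; ring

lemma phiWord_continuous (v : List (Fin m)) : Continuous (phiWord b dd v) := by
  induction v with
  | nil => exact continuous_id
  | cons i v ih => exact (continuous_const.mul ih).add continuous_const

lemma prod_pos (hb : ∀ i, 0 < b i) (v : List (Fin m)) : 0 < (v.map b).prod := by
  apply List.prod_pos
  intro x hx
  obtain ⟨i, _, rfl⟩ := List.mem_map.mp hx
  exact hb i

lemma prod_le_one (hb : ∀ i, 0 < b i) (hb1 : ∀ i, b i < 1) (v : List (Fin m)) :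
    (v.map b).prod ≤ 1 := by
  induction v with
  | nil => simp
  | cons i v ih =>
    rw [List.map_cons, List.prod_cons]
    nlinarith [prod_pos hb v, hb i, hb1 i]

lemma prod_le_pow {c : ℝ} (hb : ∀ i, 0 < b i) (hc0 : 0 ≤ c) (hbc : ∀ i, b i ≤ c)
    (v : List (Fin m)) : (v.map b).prod ≤ c ^ v.length := by
  induction v with
  | nil => simp
  | cons i v ih =>
    rw [List.map_cons, List.prod_cons, List.length_cons, pow_succ]
    calc b i * (v.map b).prod ≤ c * c ^ v.length :=
          mul_le_mul (hbc i) ih (le_of_lt (prod_pos hb v)) hc0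
      _ = c ^ (v.length + 1) := by ring

end Aux

section SetDist

lemma setDist_bddBelow (A B : Set ℝ) : BddBelow (Set.image2 dist A B) := by
  refine ⟨0, ?_⟩
  rintro x ⟨a, ha, c, hc, rfl⟩
  exact dist_nonneg

lemma setDist_le {A B : Set ℝ} {a c : ℝ} (ha : a ∈ A) (hc : c ∈ B) :
    setDist A B ≤ dist a c :=
  csInf_le (setDist_bddBelow A B) (Set.mem_image2_of_mem ha hc)

lemma setDist_comm (A B : Set ℝ) : setDist A B = setDist B A := by
  unfold setDist
  rw [Set.image2_swap]
  simp_rw [dist_comm]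

lemma setDist_exists {A B : Set ℝ} (hA : IsCompact A) (hB : IsCompact B)
    (hAne : A.Nonempty) (hBne : B.Nonempty) :
    ∃ a ∈ A, ∃ c ∈ B, dist a c = setDist A B := by
  have hc : IsCompact (Set.image2 dist A B) := by
    rw [← Set.image_prod]
    exact (hA.prod hB).image (continuous_fst.dist continuous_snd)
  have hne : (Set.image2 dist A B).Nonempty :=
    ⟨dist hAne.choose hBne.choose,
      Set.mem_image2_of_mem hAne.choose_spec hBne.choose_spec⟩
  have := hc.sInf_mem hne
  obtain ⟨a, ha, c, hcB, hac⟩ := this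
  exact ⟨a, ha, c, hcB, hac⟩

lemma chain_dist {δ : ℝ} :
    ∀ (k : ℕ) (A : ℕ → Set ℝ),
      (∀ l ≤ k, IsCompact (A l) ∧ (A l).Nonempty ∧ Metric.diam (A l) ≤ δ) →
      (∀ l < k, setDist (A l) (A (l + 1)) ≤ δ) →
      ∀ p ∈ A 0, ∀ q ∈ A k, dist p q ≤ (2 * k + 1) * δ := by
  intro k
  induction k with
  | zero =>
    intro A hA _ p hp q hq
    have := Metric.dist_le_diam_of_mem (hA 0 le_rfl).1.isBounded hp hq
    have h2 := (hA 0 le_rfl).2.2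
    simpa using this.trans h2
  | succ k ih =>
    intro A hA hE p hp q hq
    obtain ⟨x, hx, y, hy, hxy⟩ := setDist_exists (hA k (Nat.le_succ k)).1
      (hA (k+1) le_rfl).1 (hA k (Nat.le_succ k)).2.1 (hA (k+1) le_rfl).2.1
    have h1 : dist p x ≤ (2 * k + 1) * δ :=
      ih A (fun l hl => hA l (hl.trans (Nat.le_succ k)))
        (fun l hl => hE l (hl.trans (Nat.lt_succ_self k))) p hp x hx
    have h2 : dist x y ≤ δ := hxy ▸ hE k (Nat.lt_succ_self k)
    have h3 : dist y q ≤ δ :=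
      (Metric.dist_le_diam_of_mem (hA (k+1) le_rfl).1.isBounded hy hq).trans
        (hA (k+1) le_rfl).2.2
    calc dist p q ≤ dist p x + dist x y + dist y q := dist_triangle4 p x y q
      _ ≤ (2 * k + 1) * δ + δ + δ := by linarith
      _ = (2 * (k + 1 : ℕ) + 1) * δ := by push_cast; ring

lemma chain_shorten {α : Type*} (R : α → α → Prop) :
    ∀ (k : ℕ) (g : ℕ → α), (∀ l < k, R (g l) (g (l + 1))) →
    ∃ (k' : ℕ) (g' : ℕ → α), k' ≤ k ∧ g' 0 = g 0 ∧ g' k' = g k ∧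
      (∀ l ≤ k', ∃ j ≤ k, g' l = g j) ∧
      (∀ l < k', R (g' l) (g' (l + 1))) ∧
      Set.InjOn g' (Set.Iic k') := by
  intro k
  induction k using Nat.strong_induction_on with
  | _ k IH =>
    intro g hR
    by_cases hinj : Set.InjOn g (Set.Iic k)
    · exact ⟨k, g, le_rfl, rfl, rfl, fun l hl => ⟨l, hl, rfl⟩, hR, hinj⟩
    · -- obtain a repeat
      have : ∃ a ≤ k, ∃ c ≤ k, a < c ∧ g a = g c := by
        simp only [Set.InjOn, not_forall] at hinj
        obtain ⟨a, ha, c, hc, hgac, hne⟩ := hinj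
        simp only [Set.mem_Iic] at ha hc
        rcases lt_or_gt_of_ne hne with h | h
        · exact ⟨a, ha, c, hc, h, hgac⟩
        · exact ⟨c, hc, a, ha, h, hgac.symm⟩
      obtain ⟨a, ha, c, hc, hac, hg⟩ := this
      set d := c - a with hd
      have hdpos : 0 < d := by omega
      set h : ℕ → α := fun j => if j ≤ a then g j else g (j + d) with hh
      have hlen : k - d < k := by omega
      have hR' : ∀ l < k - d, R (h l) (h (l + 1)) := by
        intro l hl
        rcases le_or_gt (l + 1) a with h1 | h1
        · have : l ≤ a := by omega
          simp only [hh, if_pos this, if_pos h1]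
          exact hR l (by omega)
        · rcases le_or_gt l a with h2 | h2
          · have hla : l = a := by omega
            have e1 : h l = g c := by simp only [hh, if_pos h2]; rw [hla, hg]
            have e2 : h (l + 1) = g (c + 1) := by
              simp only [hh, if_neg (not_le.mpr h1)]; congr 1; omega
            rw [e1, e2]
            exact hR c (by omega)
          · simp only [hh, if_neg (not_le.mpr h2), if_neg (not_le.mpr (by omega : a < l + 1))]
            have : l + 1 + d = l + d + 1 := by omega
            rw [this]
            exact hR (l + d) (by omega)
      obtain ⟨k', g', hk', h0, hkend, hjsub, hE', hinj'⟩ := IH (k - d) hlen h hR'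
      refine ⟨k', g', by omega, ?_, ?_, ?_, hE', hinj'⟩
      · rw [h0]; simp [hh]
      · rw [hkend]
        simp only [hh]
        rcases le_or_gt (k - d) a with h1 | h1
        · have hka : k - d = a := by omega
          have hkc : k = c := by omega
          rw [if_pos h1, hka, hg, hkc]
        · rw [if_neg (not_le.mpr h1)]
          congr 1
          omega
      · intro l hl
        obtain ⟨j, hj, hgj⟩ := hjsub l hl
        simp only [hh] at hgj
        rcases le_or_gt j a with h1 | h1
        · rw [if_pos h1] at hgj
          exact ⟨j, by omega, hgj⟩
        · rw [if_neg (not_le.mpr h1)] at hgj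
          exact ⟨j + d, by omega, hgj⟩

end SetDist

section Conn
variable {m : ℕ} {b dd : Fin m → ℝ} {I : Finset (Fin m)} {F : Set ℝ} {δ : ℝ}
  {w w' w'' : List (Fin m)}

lemma deltaConn_refl (hw : w ∈ IdxDelta b I δ) : DeltaConn b dd I F δ w w :=
  ⟨0, fun _ => w, rfl, rfl, fun _ _ => hw, fun l hl => absurd hl (Nat.not_lt_zero l)⟩

lemma deltaConn_mem_left (h : DeltaConn b dd I F δ w w') : w ∈ IdxDelta b I δ := by
  obtain ⟨k, g, h0, hk, hmem, _⟩ := h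
  exact h0 ▸ hmem 0 (Nat.zero_le k)

lemma deltaConn_mem_right (h : DeltaConn b dd I F δ w w') : w' ∈ IdxDelta b I δ := by
  obtain ⟨k, g, h0, hk, hmem, _⟩ := h
  exact hk ▸ hmem k le_rfl

lemma deltaConn_symm (h : DeltaConn b dd I F δ w w') : DeltaConn b dd I F δ w' w := by
  obtain ⟨k, g, h0, hk, hmem, hE⟩ := h
  refine ⟨k, fun l => g (k - l), by simpa, by simpa, fun l _ => hmem (k - l) (Nat.sub_le k l),
    fun l hl => ?_⟩
  have h1 : k - l = (k - (l + 1)) + 1 := by omega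
  dsimp only
  rw [setDist_comm, h1]
  exact hE (k - (l + 1)) (by omega)

lemma deltaConn_trans (h1 : DeltaConn b dd I F δ w w') (h2 : DeltaConn b dd I F δ w' w'') :
    DeltaConn b dd I F δ w w'' := by
  obtain ⟨k1, g1, h10, h1k, h1mem, h1E⟩ := h1
  obtain ⟨k2, g2, h20, h2k, h2mem, h2E⟩ := h2
  refine ⟨k1 + k2, fun l => if l ≤ k1 then g1 l else g2 (l - k1), by simp [h10], ?_, ?_, ?_⟩
  · dsimp only
    rcases Nat.eq_zero_or_pos k2 with h | h
    · subst h
      rw [if_pos (by omega), Nat.add_zero, h1k, ← h20, h2k]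
    · rw [if_neg (by omega), show k1 + k2 - k1 = k2 by omega, h2k]
  · intro l hl
    dsimp only
    split
    · exact h1mem l ‹_›
    · exact h2mem (l - k1) (by omega)
  · intro l hl
    dsimp only
    rcases lt_or_ge l k1 with h | h
    · rw [if_pos (by omega), if_pos (by omega)]
      exact h1E l h
    · rcases eq_or_lt_of_le h with h' | h'
      · have e1 : g1 l = g2 0 := by rw [← h', h1k, h20]
        rw [if_pos (by omega), if_neg (by omega), e1, show l + 1 - k1 = 0 + 1 by omega]
        exact h2E 0 (by omega)
      · rw [if_neg (by omega), if_neg (by omega), show l + 1 - k1 = (l - k1) + 1 by omega]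
        exact h2E (l - k1) (by omega)

lemma deltaConn_step (hw : w ∈ IdxDelta b I δ) (hw' : w' ∈ IdxDelta b I δ)
    (h : setDist (phiWord b dd w '' F) (phiWord b dd w' '' F) ≤ δ) :
    DeltaConn b dd I F δ w w' := by
  refine ⟨1, fun l => if l = 0 then w else w', rfl, rfl, ?_, ?_⟩
  · intro l _; dsimp only; split <;> assumption
  · intro l hl
    have : l = 0 := by omega
    subst this
    simpa using h

lemma deltaConn_prefix {k : ℕ} {g : ℕ → List (Fin m)}
    (hmem : ∀ l ≤ k, g l ∈ IdxDelta b I δ)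
    (hE : ∀ l < k, setDist (phiWord b dd (g l) '' F) (phiWord b dd (g (l + 1)) '' F) ≤ δ)
    {l : ℕ} (hl : l ≤ k) : DeltaConn b dd I F δ (g 0) (g l) :=
  ⟨l, g, rfl, rfl, fun j hj => hmem j (hj.trans hl), fun j hj => hE j (hj.trans_le hl)⟩

end Conn

section Cover
variable {m : ℕ} {b dd : Fin m → ℝ} {I : Finset (Fin m)} {F : Set ℝ} {δ : ℝ}

lemma cover_aux (hb : ∀ i, 0 < b i) (hδ1 : δ < 1)
    (hFattr : F = ⋃ i ∈ I, (fun y => b i * y + dd i) '' F) :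
    ∀ (n : ℕ) (y : ℝ), y ∈ F →
      (∃ v ∈ IdxDelta b I δ, y ∈ phiWord b dd v '' F) ∨
      (∃ v z, (∀ i ∈ v, i ∈ I) ∧ v.length = n ∧ z ∈ F ∧ y = phiWord b dd v z ∧
        δ < (v.map b).prod) := by
  intro n
  induction n with
  | zero =>
    intro y hy
    exact Or.inr ⟨[], y, by simp, rfl, hy, rfl, by simpa using hδ1⟩
  | succ n ih =>
    intro y hy
    rcases ih y hy with h | ⟨v, z, hvI, hvlen, hzF, hyz, hprod⟩
    · exact Or.inl h
    · rw [hFattr] at hzF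
      simp only [Set.mem_iUnion, Set.mem_image] at hzF
      obtain ⟨i, hiI, z', hz'F, hz⟩ := hzF
      have hyz' : y = phiWord b dd (v ++ [i]) z' := by
        rw [phiWord_append, show phiWord b dd [i] z' = z from by
          simp only [phiWord]; exact hz]
        exact hyz
      have hvI' : ∀ j ∈ v ++ [i], j ∈ I := by
        intro j hj
        rcases List.mem_append.mp hj with h | h
        · exact hvI j h
        · rw [List.mem_singleton.mp h]; exact hiI
      have hprod' : ((v ++ [i]).map b).prod = (v.map b).prod * b i := by simp
      rcases le_or_gt (((v ++ [i]).map b).prod) δ with h | h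
      · refine Or.inl ⟨v ++ [i], ⟨by simp, hvI', h, ?_⟩, z', hz'F, hyz'.symm⟩
        rw [List.dropLast_concat]
        exact hprod
      · exact Or.inr ⟨v ++ [i], z', hvI', by simp [hvlen], hz'F, hyz', h⟩

lemma cover (hm : 0 < m) (hb : ∀ i, 0 < b i) (hb1 : ∀ i, b i < 1)
    (hδ : 0 < δ) (hδ1 : δ < 1)
    (hFattr : F = ⋃ i ∈ I, (fun y => b i * y + dd i) '' F) :
    ∀ y ∈ F, ∃ v ∈ IdxDelta b I δ, y ∈ phiWord b dd v '' F := by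
  have hne : (Finset.univ : Finset (Fin m)).Nonempty := ⟨⟨0, hm⟩, Finset.mem_univ _⟩
  set c := Finset.univ.sup' hne b with hc
  have hc1 : c < 1 := (Finset.sup'_lt_iff hne).mpr fun i _ => hb1 i
  have hc0 : 0 ≤ c :=
    le_of_lt (lt_of_lt_of_le (hb ⟨0, hm⟩) (Finset.le_sup' b (Finset.mem_univ _)))
  obtain ⟨n, hn⟩ := exists_pow_lt_of_lt_one hδ hc1
  intro y hy
  rcases cover_aux hb hδ1 hFattr n y hy with h | ⟨v, z, _, hvlen, _, _, hprod⟩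
  · exact h
  · exfalso
    have := prod_le_pow hb hc0 (fun i => Finset.le_sup' b (Finset.mem_univ i)) v
    rw [hvlen] at this
    linarith

lemma piece_diam (hb : ∀ i, 0 < b i) (hF01 : F ⊆ Set.Icc 0 1) (hδ : 0 ≤ δ)
    {v : List (Fin m)} (hv : v ∈ IdxDelta b I δ) :
    Metric.diam (phiWord b dd v '' F) ≤ δ := by
  apply Metric.diam_le_of_forall_dist_le hδ
  rintro x ⟨a, haF, rfl⟩ y ⟨e, heF, rfl⟩
  rw [Real.dist_eq, phiWord_sub, abs_mul, abs_of_nonneg (le_of_lt (prod_pos hb v))]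
  have ha := hF01 haF
  have he := hF01 heF
  simp only [Set.mem_Icc] at ha he
  have h1 : |a - e| ≤ 1 := abs_le.mpr ⟨by linarith [ha.1, he.2], by linarith [ha.2, he.1]⟩
  calc (v.map b).prod * |a - e| ≤ (v.map b).prod * 1 :=
        mul_le_mul_of_nonneg_left h1 (le_of_lt (prod_pos hb v))
    _ ≤ δ := by rw [mul_one]; exact hv.2.2.1

end Cover

/-- in the sufficiency proof, for `w ∈ 𝓘_δ`, `y₀ ∈ φ_w(F)` and
`B = ⋃_{v ∈ 𝓘_δ(w)} φ_v(F)` (over the `δ`-connected component `𝓘_δ(w)` of `w`):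
`(y₀-δ, y₀+δ) ∩ F ⊆ B`, `dist(B, F \ B) > δ` (pointwise), and `|B| ≤ 2Lδ`,
where `L = sup_{δ, w} #𝓘_δ(w) < ∞`. -/
theorem projection_block_structure {m : ℕ} (hm : 0 < m) (b dd : Fin m → ℝ)
    (hb : ∀ i, 0 < b i) (hb1 : ∀ i, b i < 1) (hbs : ∑ i, b i = 1)
    (hd : ∀ i, dd i = ∑ k ∈ Finset.univ.filter (fun k => k < i), b k)
    (I : Finset (Fin m)) (hIne : I.Nonempty) (hIproper : I ≠ Finset.univ)
    (F : Set ℝ) (hFne : F.Nonempty) (hFc : IsCompact F) (hF01 : F ⊆ Set.Icc 0 1)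
    (hFattr : F = ⋃ i ∈ I, (fun y => b i * y + dd i) '' F)
    (u v : ℝ) (huv : u < v) (hsub : Set.Ioo u v ⊆ Set.Icc 0 1)
    (hgapF : Set.Ioo u v ∩ F = ∅)
    (L : ℕ)
    (hL : ∀ δ > (0 : ℝ), ∀ w ∈ IdxDelta b I δ,
      {w' | DeltaConn b dd I F δ w w'}.Finite ∧
      {w' | DeltaConn b dd I F δ w w'}.ncard ≤ L)
    (δ : ℝ) (hδ : 0 < δ) (w : List (Fin m)) (hw : w ∈ IdxDelta b I δ)
    (y₀ : ℝ) (hy₀ : y₀ ∈ phiWord b dd w '' F) :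
    ∀ B : Set ℝ, B = ⋃ w' ∈ {w' | DeltaConn b dd I F δ w w'}, phiWord b dd w' '' F →
      (Set.Ioo (y₀ - δ) (y₀ + δ) ∩ F ⊆ B) ∧
      (∀ p ∈ B, ∀ q ∈ F \ B, δ < dist p q) ∧
      Metric.diam B ≤ 2 * L * δ := by
  intro B hB
  have hδ1 : δ < 1 := lt_of_lt_of_le hw.2.2.2 (prod_le_one hb hb1 _)
  have hcov := cover hm hb hb1 hδ hδ1 hFattr
  have hmemB : ∀ v', DeltaConn b dd I F δ w v' → ∀ x ∈ phiWord b dd v' '' F, x ∈ B := by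
    intro v' hv' x hx
    rw [hB]
    exact Set.mem_biUnion hv' hx
  have hBmem : ∀ p ∈ B, ∃ v', DeltaConn b dd I F δ w v' ∧ p ∈ phiWord b dd v' '' F := by
    intro p hp
    rw [hB] at hp
    simpa using hp
  refine ⟨?_, ?_, ?_⟩
  · -- part 1
    rintro q ⟨hq1, hqF⟩
    obtain ⟨vq, hvq, hqv⟩ := hcov q hqF
    have hdy : dist y₀ q ≤ δ := by
      rcases Set.mem_Ioo.mp hq1 with ⟨h1, h2⟩
      rw [Real.dist_eq]
      exact le_of_lt (abs_lt.mpr ⟨by linarith, by linarith⟩)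
    exact hmemB vq (deltaConn_step hw hvq ((setDist_le hy₀ hqv).trans hdy)) q hqv
  · -- part 2
    intro p hp q hq
    by_contra hle
    push_neg at hle
    obtain ⟨v', hv', hpv'⟩ := hBmem p hp
    obtain ⟨vq, hvq, hqv⟩ := hcov q hq.1
    have hstep := deltaConn_step (deltaConn_mem_right hv') hvq
      ((setDist_le hpv' hqv).trans hle)
    exact hq.2 (hmemB vq (deltaConn_trans hv' hstep) q hqv)
  · -- part 3
    apply Metric.diam_le_of_forall_dist_le (by positivity)
    intro p hp q hq
    obtain ⟨vp, hvp, hpv⟩ := hBmem p hp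
    obtain ⟨vq, hvq, hqv⟩ := hBmem q hq
    obtain ⟨k, g, hg0, hgk, hgmem, hgE⟩ := deltaConn_trans (deltaConn_symm hvp) hvq
    have hSall : ∀ l ≤ k, DeltaConn b dd I F δ w (g l) := fun l hl =>
      deltaConn_trans hvp (hg0 ▸ deltaConn_prefix hgmem hgE hl)
    obtain ⟨k', g', hk'k, h0', hk', hjsub, hE', hinj⟩ :=
      chain_shorten (fun a c => setDist (phiWord b dd a '' F) (phiWord b dd c '' F) ≤ δ)
        k g hgE
    have hS' : ∀ l ≤ k', DeltaConn b dd I F δ w (g' l) := by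
      intro l hl
      obtain ⟨j, hj, hgj⟩ := hjsub l hl
      rw [hgj]
      exact hSall j hj
    obtain ⟨hfin, hcard⟩ := hL δ hδ w hw
    have hk'L : k' + 1 ≤ L := by
      have himg : g' '' Set.Iic k' ⊆ {w' | DeltaConn b dd I F δ w w'} := by
        rintro x ⟨l, hl, rfl⟩
        exact hS' l hl
      have h1 : (g' '' Set.Iic k').ncard = k' + 1 := by
        rw [Set.ncard_image_of_injOn hinj, ← Finset.coe_Iic, Set.ncard_coe_finset,
          Nat.card_Iic]
      have h2 : (g' '' Set.Iic k').ncard ≤ {w' | DeltaConn b dd I F δ w w'}.ncard :=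
        Set.ncard_le_ncard himg hfin
      omega
    have hpieces : ∀ l ≤ k', IsCompact (phiWord b dd (g' l) '' F) ∧
        (phiWord b dd (g' l) '' F).Nonempty ∧
        Metric.diam (phiWord b dd (g' l) '' F) ≤ δ := fun l hl =>
      ⟨hFc.image (phiWord_continuous _), hFne.image _,
        piece_diam hb hF01 hδ.le (deltaConn_mem_right (hS' l hl))⟩
    have hdist := chain_dist k' (fun l => phiWord b dd (g' l) '' F) hpieces hE'
      p (by show p ∈ phiWord b dd (g' 0) '' F; rw [h0', hg0]; exact hpv)
      q (by show q ∈ phiWord b dd (g' k') '' F; rw [hk', hgk]; exact hqv)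
    have hcast : (2 * (k' : ℝ) + 1) ≤ 2 * L := by
      have : (k' : ℝ) + 1 ≤ L := by exact_mod_cast hk'L
      linarith
    calc dist p q ≤ (2 * k' + 1) * δ := hdist
      _ ≤ 2 * L * δ := mul_le_mul_of_nonneg_right hcast hδ.le
end

section
/- Let G ⊆ ℝ be a set with the property that for every open interval I there exists an open interval J ⊆ I with |J| ≥ μ|I| and J ∩ G = ∅ (for a fixed μ ∈ (0,1)). Then for any x₀ ∈ ℝ and δ > 0, there exist points a ∈ (x₀−2δ, x₀−δ) and b ∈ (x₀+δ, x₀+2δ) and a decomposition G = G' ∪ G'' with G' = G ∩ [a', a''] for suitable a' ≤ x₀−δ, a'' ≥ x₀+δ such that dist(G', G'') ≥ μδ and G ∩ (x₀−δ, x₀+δ) ⊆ G'. Consequently, the δh-neighborhoods satisfy: if h < μ/3 then dist(G'_{δh}, G''_{δh}) ≥ μδ/3, (x₀−δ, x₀+δ) ⊆ G'_{δh} ∪ ((x₀−δ,x₀+δ)∖G_{δh}), and |G'_{δh}| ≤ 4δ + 2δh, where S_{δh} denotes {x : dist(x,S) ≤ δh}. -/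
open Set Metric

lemma exists_close_of_mem_cthickening' {S : Set ℝ} {t : ℝ} {p : ℝ}
    (hp : p ∈ Metric.cthickening t S) {ε : ℝ} (hε : 0 < ε) (ht : 0 ≤ t) :
    ∃ s ∈ S, dist p s < t + ε := by
  rw [Metric.mem_cthickening_iff] at hp
  have hlt : EMetric.infEdist p S < ENNReal.ofReal (t + ε) :=
    lt_of_le_of_lt hp ((ENNReal.ofReal_lt_ofReal_iff_of_nonneg ht).2 (by linarith))
  obtain ⟨s, hs, hd⟩ := EMetric.infEdist_lt_iff.mp hlt
  exact ⟨s, hs, (edist_lt_ofReal).mp hd⟩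

/-- suppose every open interval `(x, y)` contains an open subinterval of
length at least `μ (y - x)` disjoint from `G`. Then for any `x₀` and `δ > 0` there are
suitable cut points `a' ∈ (x₀-2δ, x₀-δ]` and `a'' ∈ [x₀+δ, x₀+2δ)` such that, setting
`G' = G ∩ [a', a'']` and `G'' = G \ G'`: `dist(G', G'') ≥ μδ` (pointwise),
`G ∩ (x₀-δ, x₀+δ) ⊆ G'`, and for every `h ∈ (0, μ/3)` the closed `δh`-neighborhoods satisfy
`dist(G'_{δh}, G''_{δh}) ≥ μδ/3`,
`(x₀-δ, x₀+δ) ⊆ G'_{δh} ∪ ((x₀-δ, x₀+δ) \ G_{δh})`, and `|G'_{δh}| ≤ 4δ + 2δh`. -/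
theorem porous_splitting (G : Set ℝ) (μ : ℝ) (hμ : μ ∈ Set.Ioo (0 : ℝ) 1)
    (hpor : ∀ x y : ℝ, x < y → ∃ x' y' : ℝ, x ≤ x' ∧ x' < y' ∧ y' ≤ y ∧
      μ * (y - x) ≤ y' - x' ∧ Set.Ioo x' y' ∩ G = ∅)
    (x₀ δ : ℝ) (hδ : 0 < δ) :
    ∃ a' a'' : ℝ, x₀ - 2 * δ < a' ∧ a' ≤ x₀ - δ ∧ x₀ + δ ≤ a'' ∧ a'' < x₀ + 2 * δ ∧
      ∀ G' G'' : Set ℝ, G' = G ∩ Set.Icc a' a'' → G'' = G \ G' →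
        (∀ p ∈ G', ∀ q ∈ G'', μ * δ ≤ dist p q) ∧
        (G ∩ Set.Ioo (x₀ - δ) (x₀ + δ) ⊆ G') ∧
        ∀ h : ℝ, 0 < h → h < μ / 3 →
          (∀ p ∈ Metric.cthickening (δ * h) G', ∀ q ∈ Metric.cthickening (δ * h) G'',
            μ * δ / 3 ≤ dist p q) ∧
          (Set.Ioo (x₀ - δ) (x₀ + δ) ⊆ Metric.cthickening (δ * h) G' ∪
            (Set.Ioo (x₀ - δ) (x₀ + δ) \ Metric.cthickening (δ * h) G)) ∧
          Metric.diam (Metric.cthickening (δ * h) G') ≤ 4 * δ + 2 * (δ * h) := by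
  obtain ⟨hμ0, hμ1⟩ := hμ
  have hμδ : 0 < μ * δ := by positivity
  obtain ⟨x₁, y₁, hx₁, hxy₁, hy₁, hlen₁, hgap₁⟩ := hpor (x₀ - 2 * δ) (x₀ - δ) (by linarith)
  obtain ⟨x₂, y₂, hx₂, hxy₂, hy₂, hlen₂, hgap₂⟩ := hpor (x₀ + δ) (x₀ + 2 * δ) (by linarith)
  have hlen₁' : μ * δ ≤ y₁ - x₁ := by
    have : (x₀ - δ) - (x₀ - 2 * δ) = δ := by ring
    rwa [this] at hlen₁
  have hlen₂' : μ * δ ≤ y₂ - x₂ := by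
    have : (x₀ + 2 * δ) - (x₀ + δ) = δ := by ring
    rwa [this] at hlen₂
  set a' := (x₁ + y₁) / 2 with ha'def
  set a'' := (x₂ + y₂) / 2 with ha''def
  have hx₁a : x₁ < a' := by simp only [ha'def]; linarith
  have hay₁ : a' < y₁ := by simp only [ha'def]; linarith
  have hx₂a : x₂ < a'' := by simp only [ha''def]; linarith
  have hay₂ : a'' < y₂ := by simp only [ha''def]; linarith
  -- points of G below a' are ≤ x₁, points of G above a' are ≥ y₁ (since a' ∈ gap)
  have key1 : ∀ p ∈ G, a' ≤ p → y₁ ≤ p := by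
    intro p hp hap
    by_contra hlt
    exact Set.eq_empty_iff_forall_notMem.mp hgap₁ p ⟨⟨by linarith, by linarith⟩, hp⟩
  have key1' : ∀ p ∈ G, p < a' → p ≤ x₁ := by
    intro p hp hap
    by_contra hlt
    exact Set.eq_empty_iff_forall_notMem.mp hgap₁ p ⟨⟨by linarith, by linarith⟩, hp⟩
  have key2 : ∀ p ∈ G, p ≤ a'' → p ≤ x₂ := by
    intro p hp hap
    by_contra hlt
    exact Set.eq_empty_iff_forall_notMem.mp hgap₂ p ⟨⟨by linarith, by linarith⟩, hp⟩
  have key2' : ∀ p ∈ G, a'' < p → y₂ ≤ p := by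
    intro p hp hap
    by_contra hlt
    exact Set.eq_empty_iff_forall_notMem.mp hgap₂ p ⟨⟨by linarith, by linarith⟩, hp⟩
  refine ⟨a', a'', by linarith, by linarith, by linarith, by linarith, ?_⟩
  intro G' G'' hG' hG''
  -- base distance bound
  have hdist : ∀ p ∈ G', ∀ q ∈ G'', μ * δ ≤ dist p q := by
    intro p hp q hq
    rw [hG'] at hp
    rw [hG'', hG'] at hq
    have hpG : p ∈ G := hp.1
    have hpa : a' ≤ p := hp.2.1
    have hpb : p ≤ a'' := hp.2.2
    have hqG : q ∈ G := hq.1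
    have hqout : q ∉ Set.Icc a' a'' := fun hin => hq.2 ⟨hqG, hin⟩
    rw [Set.mem_Icc, not_and_or] at hqout
    rcases hqout with hqa | hqb
    · push_neg at hqa
      have h1 : q ≤ x₁ := key1' q hqG hqa
      have h2 : y₁ ≤ p := key1 p hpG hpa
      rw [Real.dist_eq, abs_sub_comm, abs_of_nonpos (by linarith)]
      linarith
    · push_neg at hqb
      have h1 : y₂ ≤ q := key2' q hqG hqb
      have h2 : p ≤ x₂ := key2 p hpG hpb
      rw [Real.dist_eq, abs_of_nonpos (by linarith)]
      linarith
  have hsub : G ∩ Set.Ioo (x₀ - δ) (x₀ + δ) ⊆ G' := by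
    rw [hG']
    intro z hz
    exact ⟨hz.1, ⟨by have := hz.2.1; linarith, by have := hz.2.2; linarith⟩⟩
  refine ⟨hdist, hsub, ?_⟩
  intro h hh0 hh3
  have hδh0 : 0 < δ * h := by positivity
  have hδhlt : δ * h < μ * δ / 3 := by
    have := mul_lt_mul_of_pos_left hh3 hδ
    linarith [this]
  constructor
  · -- thickened distance bound
    intro p hp q hq
    refine le_of_forall_pos_le_add ?_
    intro ε hε
    obtain ⟨p₀, hp₀, hdp⟩ := exists_close_of_mem_cthickening' hp (half_pos hε) hδh0.le
    obtain ⟨q₀, hq₀, hdq⟩ := exists_close_of_mem_cthickening' hq (half_pos hε) hδh0.le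
    have h1 : μ * δ ≤ dist p₀ q₀ := hdist p₀ hp₀ q₀ hq₀
    have h2 : dist p₀ q₀ ≤ dist p₀ p + dist p q + dist q q₀ := dist_triangle4 p₀ p q q₀
    rw [dist_comm p₀ p] at h2
    have hdq' : dist q₀ q < δ * h + ε / 2 := by rw [dist_comm]; exact hdq
    linarith
  constructor
  · -- covering
    intro x hx
    by_cases hxG : x ∈ Metric.cthickening (δ * h) G
    · left
      rw [Metric.mem_cthickening_iff]
      refine ENNReal.le_of_forall_pos_le_add ?_
      intro ε hε _
      set ε' : ℝ := min (ε : ℝ) (μ * δ / 2) with hε'def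
      have hε'0 : 0 < ε' := lt_min (by exact_mod_cast hε) (by linarith)
      obtain ⟨p, hpG, hdp⟩ := exists_close_of_mem_cthickening' hxG hε'0 hδh0.le
      have hsmall : δ * h + ε' < μ * δ := by
        have h1 : ε' ≤ μ * δ / 2 := min_le_right _ _
        linarith
    -- p is in [a', a'']
      have hxl : x₀ - δ < x := hx.1
      have hxr : x < x₀ + δ := hx.2
      have hdxp : |x - p| < μ * δ := lt_of_lt_of_le (by rw [← Real.dist_eq]; exact lt_of_lt_of_le hdp hsmall.le) le_rfl
      have hpa' : a' ≤ p := by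
        by_contra hlt
        push_neg at hlt
        have h1 : p ≤ x₁ := key1' p hpG hlt
        have h2 : x - p ≥ (x₀ - δ) - x₁ := by linarith
        have h3 : y₁ - x₁ ≤ (x₀ - δ) - x₁ := by linarith
        have : μ * δ ≤ x - p := by linarith
        have : x - p ≤ |x - p| := le_abs_self _
        linarith
      have hpa'' : p ≤ a'' := by
        by_contra hlt
        push_neg at hlt
        have h1 : y₂ ≤ p := key2' p hpG hlt
        have h2 : p - x ≥ y₂ - (x₀ + δ) := by linarith
        have h3 : μ * δ ≤ y₂ - x₂ := hlen₂'
        have : μ * δ ≤ p - x := by linarith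
        have : p - x ≤ |x - p| := by rw [abs_sub_comm]; exact le_abs_self _
        linarith
      have hpG' : p ∈ G' := by rw [hG']; exact ⟨hpG, hpa', hpa''⟩
      calc EMetric.infEdist x G' ≤ edist x p := EMetric.infEdist_le_edist_of_mem hpG'
        _ ≤ ENNReal.ofReal (δ * h + ε') := by
            rw [edist_dist]; exact ENNReal.ofReal_le_ofReal hdp.le
        _ ≤ ENNReal.ofReal (δ * h) + ε := by
            rw [ENNReal.ofReal_add hδh0.le hε'0.le]
            gcongr
            calc ENNReal.ofReal ε' ≤ ENNReal.ofReal ε := by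
                  exact ENNReal.ofReal_le_ofReal (min_le_left _ _)
              _ = ε := ENNReal.ofReal_coe_nnreal
    · right
      exact ⟨hx, hxG⟩
  · -- diameter bound
    have hb : Metric.diam G' ≤ 4 * δ := by
      have hsub' : G' ⊆ Set.Icc a' a'' := by rw [hG']; exact Set.inter_subset_right
      calc Metric.diam G' ≤ Metric.diam (Set.Icc a' a'') :=
            Metric.diam_mono hsub' (Metric.isBounded_Icc a' a'')
        _ = a'' - a' := Real.diam_Icc (by linarith)
        _ ≤ 4 * δ := by linarith
    calc Metric.diam (Metric.cthickening (δ * h) G') ≤ Metric.diam G' + 2 * (δ * h) :=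
          Metric.diam_cthickening_le _ hδh0.le
      _ ≤ 4 * δ + 2 * (δ * h) := by linarith
end
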